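/- arXiv:1205.6346 — 5 statements merged into one kernel-verified Lean document; each statement's English description precedes it below -/
import Mathlib

section
/- In every multiplayer quantitative reachability game (G, v₀), there exists a subgame perfect equilibrium, i.e. a strategy profile (σ_i)_{i∈Π} such that for every history hv of the game, the restricted profile (σ_i|_h) is a Nash equilibrium in the subgame (G|_h, v). -/
open scoped Classical ENat
set_option linter.unusedSectionVars false

/-- A multiplayer quantitative reachability game: a finite directed graph whose
vertices are partitioned among the players (via `owner`), every vertex has an
outgoing edge, and each player `i` has a nonempty goal set `F i`. -/
structure QRGame (ι V : Type) where
  owner : V → ι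
  E : V → V → Prop
  total : ∀ v, ∃ w, E v w
  F : ι → Set V
  F_ne : ∀ i, (F i).Nonempty

namespace QRGame

variable {ι V : Type}

/-- Histories are encoded as *reversed* nonempty lists: the head is the current
vertex, the last element is the initial vertex `v₀`, and consecutive elements
are joined by edges of the graph. -/
def IsHist (G : QRGame ι V) (v₀ : V) : List V → Prop
  | [] => False
  | [v] => v = v₀
  | v :: w :: t => G.E w v ∧ IsHist G v₀ (w :: t)

/-- The current (i.e. most recent) vertex of a history. -/
def cur (v₀ : V) (h : List V) : V := h.headD v₀

/-- `σ` is a valid strategy of player `i`: on every history whose current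
vertex belongs to player `i`, it chooses a successor along an edge. -/
def IsStrat (G : QRGame ι V) (v₀ : V) (i : ι) (σ : List V → V) : Prop :=
  ∀ h : List V, G.IsHist v₀ h → G.owner (cur v₀ h) = i → G.E (cur v₀ h) (σ h)

/-- A strategy profile: one valid strategy for each player. -/
def IsProfile (G : QRGame ι V) (v₀ : V) (σ : ι → List V → V) : Prop :=
  ∀ i, G.IsStrat v₀ i (σ i)

/-- The history reached after `n` further steps when all players follow the
profile `σ` from the history `h` on. -/
def histFrom (G : QRGame ι V) (v₀ : V) (σ : ι → List V → V) (h : List V) : ℕ → List V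
  | 0 => h
  | n + 1 =>
      σ (G.owner (cur v₀ (histFrom G v₀ σ h n))) (histFrom G v₀ σ h n)
        :: histFrom G v₀ σ h n

/-- The full play (indexed from time `0`) whose prefix is the history `h` and
which is consistent with the profile `σ` after `h`. -/
def fullPlay (G : QRGame ι V) (v₀ : V) (σ : ι → List V → V) (h : List V) (t : ℕ) : V :=
  (G.histFrom v₀ σ h t).reverse.getD t v₀

/-- The outcome `⟨(σ_i)⟩_{v₀}` of the profile `σ` from the initial vertex. -/
def outcome (G : QRGame ι V) (v₀ : V) (σ : ι → List V → V) : ℕ → V :=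
  G.fullPlay v₀ σ [v₀]

/-- Cost of player `i` for a play `ρ`: the least `l` with `ρ l ∈ F i`,
and `⊤` (i.e. `+∞`) if there is no such `l`. -/
noncomputable def cost (G : QRGame ι V) (i : ι) (ρ : ℕ → V) : ℕ∞ :=
  ⨅ l ∈ {l : ℕ | ρ l ∈ G.F i}, (l : ℕ∞)

/-- Cost of player `i` for the finite prefix `ρ₀ … ρ_{m-1}` of a play. -/
noncomputable def costLT (G : QRGame ι V) (i : ι) (ρ : ℕ → V) (m : ℕ) : ℕ∞ :=
  ⨅ l ∈ {l : ℕ | l < m ∧ ρ l ∈ G.F i}, (l : ℕ∞)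

end QRGame

namespace QRGame

variable {ι V : Type} [DecidableEq ι]

/-- `σ` restricted after the history `h` is a Nash equilibrium in the subgame
`(G|_h, cur h)`: no player `j` can strictly decrease his cost (computed on the
whole play, including the prefix `h`) by deviating after `h`. -/
def IsNashAfter (G : QRGame ι V) (v₀ : V) (σ : ι → List V → V) (h : List V) : Prop :=
  ∀ (j : ι) (σ' : List V → V), G.IsStrat v₀ j σ' →
    G.cost j (G.fullPlay v₀ σ h) ≤ G.cost j (G.fullPlay v₀ (Function.update σ j σ') h)

/-- A subgame perfect equilibrium: a Nash equilibrium in every subgame. -/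
def IsSPE (G : QRGame ι V) (v₀ : V) (σ : ι → List V → V) : Prop :=
  ∀ h : List V, G.IsHist v₀ h → G.IsNashAfter v₀ σ h

end QRGame

namespace QRGame

variable {ι V : Type} [DecidableEq ι] [Fintype V]

lemma IsHist.ne_nil {G : QRGame ι V} {v₀ : V} {h : List V} (hh : G.IsHist v₀ h) :
    h ≠ [] := by
  cases h with
  | nil => exact absurd hh (by simp [IsHist])
  | cons a t => simp

lemma isHist_cons {G : QRGame ι V} {v₀ : V} {h : List V} (hne : h ≠ []) (w : V) :
    G.IsHist v₀ (w :: h) ↔ G.E (cur v₀ h) w ∧ G.IsHist v₀ h := by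
  cases h with
  | nil => exact absurd rfl hne
  | cons a t => exact Iff.rfl

/-! ### cost lemmas -/

lemma cost_le (G : QRGame ι V) {i : ι} {ρ : ℕ → V} {l : ℕ} (hl : ρ l ∈ G.F i) :
    G.cost i ρ ≤ (l : ℕ∞) :=
  iInf₂_le l hl

lemma exists_le_of_cost_le (G : QRGame ι V) {i : ι} {ρ : ℕ → V} {d : ℕ}
    (h : G.cost i ρ ≤ (d : ℕ∞)) : ∃ l ≤ d, ρ l ∈ G.F i := by
  by_contra hc
  push_neg at hc
  have h2 : ((d + 1 : ℕ) : ℕ∞) ≤ G.cost i ρ := by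
    refine le_iInf₂ fun l hl => ?_
    have h3 : ¬ l ≤ d := fun hld => hc l hld hl
    exact_mod_cast show d + 1 ≤ l by omega
  have h4 : ((d + 1 : ℕ) : ℕ∞) ≤ ((d : ℕ) : ℕ∞) := h2.trans h
  have h5 : d + 1 ≤ d := by exact_mod_cast h4
  omega

lemma costLT_le (G : QRGame ι V) {i : ι} {ρ : ℕ → V} {l m : ℕ} (hlm : l < m)
    (hl : ρ l ∈ G.F i) : G.costLT i ρ m ≤ (l : ℕ∞) :=
  iInf₂_le l ⟨hlm, hl⟩

lemma exists_le_of_costLT_le (G : QRGame ι V) {i : ι} {ρ : ℕ → V} {m d : ℕ}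
    (h : G.costLT i ρ m ≤ (d : ℕ∞)) : ∃ l ≤ d, l < m ∧ ρ l ∈ G.F i := by
  by_contra hc
  push_neg at hc
  have h2 : ((d + 1 : ℕ) : ℕ∞) ≤ G.costLT i ρ m := by
    refine le_iInf₂ fun l hl => ?_
    have h3 : ¬ l ≤ d := fun hld => (hc l hld hl.1) hl.2
    exact_mod_cast show d + 1 ≤ l by omega
  have h4 : ((d + 1 : ℕ) : ℕ∞) ≤ ((d : ℕ) : ℕ∞) := h2.trans h
  have h5 : d + 1 ≤ d := by exact_mod_cast h4
  omega

lemma costLT_congr (G : QRGame ι V) {i : ι} {ρ ρ' : ℕ → V} {m : ℕ}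
    (hρ : ∀ l < m, ρ l = ρ' l) : G.costLT i ρ m = G.costLT i ρ' m := by
  refine le_antisymm (le_iInf₂ fun l hl => ?_) (le_iInf₂ fun l hl => ?_)
  · obtain ⟨h1, h2⟩ := hl
    exact iInf₂_le l ⟨h1, by rw [hρ l h1]; exact h2⟩
  · obtain ⟨h1, h2⟩ := hl
    exact iInf₂_le l ⟨h1, by rw [← hρ l h1]; exact h2⟩

/-! ### picking a minimizing successor -/

lemma exists_min_succ (G : QRGame ι V) (v : V) (f : V → ℕ∞) :
    ∃ w, G.E v w ∧ ∀ u, G.E v u → f w ≤ f u := by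
  classical
  obtain ⟨w0, hw0⟩ := G.total v
  obtain ⟨b, hb, hbmin⟩ := Finset.exists_min_image
    (Finset.univ.filter fun w => G.E v w) f ⟨w0, by simp [hw0]⟩
  exact ⟨b, by simpa using hb, fun u hu => hbmin u (by simp [hu])⟩

noncomputable def pick (G : QRGame ι V) (v : V) (f : V → ℕ∞) : V :=
  Classical.choose (G.exists_min_succ v f)

lemma pick_edge (G : QRGame ι V) (v : V) (f : V → ℕ∞) : G.E v (G.pick v f) :=
  (Classical.choose_spec (G.exists_min_succ v f)).1

lemma pick_le (G : QRGame ι V) (v : V) (f : V → ℕ∞) {u : V} (hu : G.E v u) :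
    f (G.pick v f) ≤ f u :=
  (Classical.choose_spec (G.exists_min_succ v f)).2 u hu

/-! ### backward induction -/

/-- Cost of a finite history viewed as a play prefix. -/
noncomputable def costOfHist (G : QRGame ι V) (v₀ : V) (i : ι) (H : List V) : ℕ∞ :=
  G.costLT i (fun t => H.reverse.getD t v₀) H.length

/-- Backward-induction extension of a history by `k` optimal steps. -/
noncomputable def biaux (G : QRGame ι V) (v₀ : V) : ℕ → List V → List V
  | 0, h => h
  | (k+1), h =>
      biaux G v₀ k
        ((G.pick (cur v₀ h)
            (fun w => G.costOfHist v₀ (G.owner (cur v₀ h)) (biaux G v₀ k (w :: h)))) :: h)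

/-- The backward-induction move with horizon `N`. -/
noncomputable def bimove (G : QRGame ι V) (v₀ : V) (N : ℕ) (h : List V) : V :=
  if h.length < N then
    G.pick (cur v₀ h)
      (fun w => G.costOfHist v₀ (G.owner (cur v₀ h)) (biaux G v₀ (N - h.length - 1) (w :: h)))
  else Classical.choose (G.total (cur v₀ h))

lemma bimove_edge (G : QRGame ι V) (v₀ : V) (N : ℕ) (h : List V) :
    G.E (cur v₀ h) (G.bimove v₀ N h) := by
  unfold bimove
  split
  · exact G.pick_edge _ _
  · exact Classical.choose_spec (G.total (cur v₀ h))

lemma biaux_cons (G : QRGame ι V) (v₀ : V) {N k : ℕ} {h : List V}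
    (hk : h.length + k + 1 = N) :
    G.biaux v₀ (k+1) h = G.biaux v₀ k (G.bimove v₀ N h :: h) := by
  unfold bimove
  rw [if_pos (show h.length < N by omega), show N - h.length - 1 = k from by omega]
  rfl

end QRGame

namespace QRGame

variable {ι V : Type} [DecidableEq ι] [Fintype V]
variable {G : QRGame ι V} {v₀ : V} {σ : ι → List V → V} {h : List V}

lemma histFrom_length (G : QRGame ι V) (v₀ : V) (σ : ι → List V → V) (h : List V) :
    ∀ t, (G.histFrom v₀ σ h t).length = h.length + t
  | 0 => rfl
  | (t+1) => by
      show (_ :: G.histFrom v₀ σ h t).length = _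
      rw [List.length_cons, histFrom_length G v₀ σ h t]; omega

lemma histFrom_getD {s : ℕ} :
    ∀ {t t' : ℕ}, t ≤ t' → s < h.length + t →
      (G.histFrom v₀ σ h t').reverse.getD s v₀ = (G.histFrom v₀ σ h t).reverse.getD s v₀ := by
  intro t t' htt' hs
  induction t' with
  | zero =>
    have : t = 0 := Nat.le_zero.mp htt'
    subst this; rfl
  | succ t' ih =>
    rcases Nat.lt_or_ge t (t'+1) with h1 | h2
    · have ht : t ≤ t' := by omega
      rw [← ih ht]
      show ((_ : V) :: G.histFrom v₀ σ h t').reverse.getD s v₀ = _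
      rw [List.reverse_cons, List.getD_append]
      rw [List.length_reverse, histFrom_length]
      omega
    · have : t = t' + 1 := le_antisymm htt' h2
      subst this; rfl

lemma fullPlay_eq_getD (hne : h ≠ []) {s t : ℕ} (hs : s < h.length + t) :
    G.fullPlay v₀ σ h s = (G.histFrom v₀ σ h t).reverse.getD s v₀ := by
  have hpos : 0 < h.length := List.length_pos_iff.mpr hne
  show (G.histFrom v₀ σ h s).reverse.getD s v₀ = _
  rcases le_total s t with h1 | h1
  · exact (histFrom_getD h1 (show s < h.length + s by omega)).symm
  · exact histFrom_getD h1 hs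

lemma fullPlay_prefix (hne : h ≠ []) {s : ℕ} (hs : s < h.length) :
    G.fullPlay v₀ σ h s = h.reverse.getD s v₀ :=
  fullPlay_eq_getD hne (t := 0) (by omega)

lemma histFrom_cons_eq {w : V} (hw : σ (G.owner (cur v₀ h)) h = w) :
    ∀ t, G.histFrom v₀ σ (w :: h) t = G.histFrom v₀ σ h (t + 1)
  | 0 => by
      show w :: h = σ (G.owner (cur v₀ (G.histFrom v₀ σ h 0))) (G.histFrom v₀ σ h 0) :: h
      show w :: h = σ (G.owner (cur v₀ h)) h :: h
      rw [hw]
  | (t+1) => by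
      show _ :: G.histFrom v₀ σ (w :: h) t = _ :: G.histFrom v₀ σ h (t+1)
      rw [histFrom_cons_eq hw t]

lemma fullPlay_cons (hne : h ≠ []) {w : V} (hw : σ (G.owner (cur v₀ h)) h = w) (s : ℕ) :
    G.fullPlay v₀ σ (w :: h) s = G.fullPlay v₀ σ h s := by
  have hpos : 0 < h.length := List.length_pos_iff.mpr hne
  show (G.histFrom v₀ σ (w :: h) s).reverse.getD s v₀ = _
  rw [histFrom_cons_eq hw s, ← fullPlay_eq_getD hne (t := s + 1) (by omega)]

lemma costLT_eq_costOfHist {i : ι} {N : ℕ} (hne : h ≠ []) (hlen : h.length ≤ N) :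
    G.costLT i (G.fullPlay v₀ σ h) N =
      G.costOfHist v₀ i (G.histFrom v₀ σ h (N - h.length)) := by
  unfold costOfHist
  rw [histFrom_length, show h.length + (N - h.length) = N from by omega]
  exact G.costLT_congr fun l hl => fullPlay_eq_getD hne (by omega)

lemma histFrom_biaux (G : QRGame ι V) (v₀ : V) (N : ℕ) :
    ∀ (k : ℕ) (h : List V), h.length + k = N →
      G.histFrom v₀ (fun _ : ι => G.bimove v₀ N) h k = G.biaux v₀ k h
  | 0, h, _ => rfl
  | (k+1), h, hk => by
    have h1 : G.histFrom v₀ (fun _ : ι => G.bimove v₀ N) h (k+1)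
        = G.histFrom v₀ (fun _ : ι => G.bimove v₀ N) (G.bimove v₀ N h :: h) k :=
      (histFrom_cons_eq rfl k).symm
    rw [h1, histFrom_biaux G v₀ N k _ (by simp; omega),
      ← G.biaux_cons v₀ (by omega)]

end QRGame

namespace QRGame

variable {ι V : Type} [DecidableEq ι] [Fintype V]

lemma nashN (G : QRGame ι V) (v₀ : V) (N : ℕ) (j : ι) (σ' : List V → V)
    (hσ' : G.IsStrat v₀ j σ') :
    ∀ (k : ℕ) (h : List V), G.IsHist v₀ h → N ≤ h.length + k →
      G.costLT j (G.fullPlay v₀ (fun _ : ι => G.bimove v₀ N) h) N ≤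
        G.costLT j
          (G.fullPlay v₀ (Function.update (fun _ : ι => G.bimove v₀ N) j σ') h) N := by
  intro k
  induction k with
  | zero =>
    intro h hh hNle
    refine le_of_eq (G.costLT_congr fun l hl => ?_)
    rw [fullPlay_prefix hh.ne_nil (by omega), fullPlay_prefix hh.ne_nil (by omega)]
  | succ k ih =>
    intro h hh hNle
    rcases le_or_gt N (h.length + k) with hNk | hNk
    · exact ih h hh hNk
    -- exact horizon: N = h.length + k + 1
    have hne : h ≠ [] := hh.ne_nil
    have hpos : 0 < h.length := List.length_pos_iff.mpr hne
    set σN : ι → List V → V := fun _ : ι => G.bimove v₀ N with hσN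
    set dev : ι → List V → V := Function.update σN j σ' with hdev
    by_cases hij : G.owner (cur v₀ h) = j
    · -- the deviator moves
      set w' : V := σ' h with hw'
      have hEw' : G.E (cur v₀ h) w' := hσ' h hh hij
      have hdevmove : dev (G.owner (cur v₀ h)) h = w' := by
        rw [hdev, hij, Function.update_self]
      have hist' : G.IsHist v₀ (w' :: h) := (isHist_cons hne w').mpr ⟨hEw', hh⟩
      have hplay : ∀ s, G.fullPlay v₀ dev (w' :: h) s = G.fullPlay v₀ dev h s :=
        fullPlay_cons hne hdevmove
      have hIH := ih (w' :: h) hist' (by simp; omega)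
      -- value of following σN from (u :: h), for any successor u
      have hval : ∀ u : V,
          G.costLT j (G.fullPlay v₀ σN (u :: h)) N
            = G.costOfHist v₀ j (G.biaux v₀ k (u :: h)) := by
        intro u
        rw [costLT_eq_costOfHist (by simp) (by simp; omega)]
        rw [show N - (u :: h).length = k from by simp; omega]
        rw [histFrom_biaux G v₀ N k (u :: h) (by simp; omega)]
      -- σN's move from h
      set w : V := G.bimove v₀ N h with hwdef
      have hmove : σN (G.owner (cur v₀ h)) h = w := rfl
      have hplayN : ∀ s, G.fullPlay v₀ σN (w :: h) s = G.fullPlay v₀ σN h s :=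
        fullPlay_cons hne hmove
      have hw_pick : w = G.pick (cur v₀ h)
          (fun u => G.costOfHist v₀ j (G.biaux v₀ k (u :: h))) := by
        rw [hwdef]
        unfold bimove
        rw [if_pos (show h.length < N by omega), show N - h.length - 1 = k from by omega,
          hij]
      have hopt : G.costOfHist v₀ j (G.biaux v₀ k (w :: h))
          ≤ G.costOfHist v₀ j (G.biaux v₀ k (w' :: h)) := by
        rw [hw_pick]
        exact G.pick_le (cur v₀ h)
          (fun u => G.costOfHist v₀ j (G.biaux v₀ k (u :: h))) hEw' 
      calc G.costLT j (G.fullPlay v₀ σN h) N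
          = G.costLT j (G.fullPlay v₀ σN (w :: h)) N :=
            (G.costLT_congr fun l _ => hplayN l).symm
        _ = G.costOfHist v₀ j (G.biaux v₀ k (w :: h)) := hval w
        _ ≤ G.costOfHist v₀ j (G.biaux v₀ k (w' :: h)) := hopt
        _ = G.costLT j (G.fullPlay v₀ σN (w' :: h)) N := (hval w').symm
        _ ≤ G.costLT j (G.fullPlay v₀ dev (w' :: h)) N := hIH
        _ = G.costLT j (G.fullPlay v₀ dev h) N := G.costLT_congr fun l _ => hplay l
    · -- another player moves: both profiles make the same move
      set w : V := G.bimove v₀ N h with hwdef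
      have hmove : σN (G.owner (cur v₀ h)) h = w := rfl
      have hdevmove : dev (G.owner (cur v₀ h)) h = w := by
        rw [hdev, Function.update_of_ne hij]
      have hist' : G.IsHist v₀ (w :: h) :=
        (isHist_cons hne w).mpr ⟨G.bimove_edge v₀ N h, hh⟩
      have hIH := ih (w :: h) hist' (by simp; omega)
      calc G.costLT j (G.fullPlay v₀ σN h) N
          = G.costLT j (G.fullPlay v₀ σN (w :: h)) N :=
            (G.costLT_congr fun l _ => fullPlay_cons hne hmove l).symm
        _ ≤ G.costLT j (G.fullPlay v₀ dev (w :: h)) N := hIH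
        _ = G.costLT j (G.fullPlay v₀ dev h) N :=
            G.costLT_congr fun l _ => fullPlay_cons hne hdevmove l

end QRGame

namespace QRGame

variable {ι V : Type} [DecidableEq ι] [Fintype V]

/-! ### profiles that agree on short histories yield the same initial play -/

lemma histFrom_congr {G : QRGame ι V} {v₀ : V} {σ₁ σ₂ : ι → List V → V} {M : ℕ}
    (hag : ∀ (i : ι) (l : List V), l.length ≤ M → σ₁ i l = σ₂ i l) (h : List V) :
    ∀ t : ℕ, h.length + t ≤ M + 1 → G.histFrom v₀ σ₁ h t = G.histFrom v₀ σ₂ h t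
  | 0, _ => rfl
  | (t+1), hb => by
    have h1 : G.histFrom v₀ σ₁ h t = G.histFrom v₀ σ₂ h t :=
      histFrom_congr hag h t (by omega)
    show σ₁ _ (G.histFrom v₀ σ₁ h t) :: G.histFrom v₀ σ₁ h t
        = σ₂ _ (G.histFrom v₀ σ₂ h t) :: G.histFrom v₀ σ₂ h t
    rw [h1, hag _ _ (by rw [histFrom_length]; omega)]

lemma fullPlay_congr {G : QRGame ι V} {v₀ : V} {σ₁ σ₂ : ι → List V → V} {M : ℕ}
    (hag : ∀ (i : ι) (l : List V), l.length ≤ M → σ₁ i l = σ₂ i l) (h : List V)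
    {s : ℕ} (hs : h.length + s ≤ M + 1) :
    G.fullPlay v₀ σ₁ h s = G.fullPlay v₀ σ₂ h s := by
  show (G.histFrom v₀ σ₁ h s).reverse.getD s v₀ = (G.histFrom v₀ σ₂ h s).reverse.getD s v₀
  rw [histFrom_congr hag h s hs]

/-! ### ultrafilter limit of the finite-horizon profiles -/

noncomputable def UF : Ultrafilter ℕ := Ultrafilter.of Filter.atTop

lemma UF_le_atTop : (UF : Filter ℕ) ≤ Filter.atTop := Ultrafilter.of_le _

lemma exists_lim (g : ℕ → V) : ∃ v : V, {N | g N = v} ∈ UF := by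
  by_contra hc
  push_neg at hc
  have h1 : ∀ v : V, {N | g N ≠ v} ∈ UF := fun v =>
    (Ultrafilter.compl_mem_iff_notMem (s := {N | g N = v})).mpr (hc v)
  have h2 : (⋂ v : V, {N | g N ≠ v}) ∈ UF := Filter.iInter_mem.mpr h1
  have h3 : (⋂ v : V, {N | g N ≠ v}) = (∅ : Set ℕ) := by
    ext N; simp
  rw [h3] at h2
  exact (Filter.empty_notMem (UF : Filter ℕ)) h2

/-- The limit strategy: an ultrafilter limit of the backward-induction moves. -/
noncomputable def limStrat (G : QRGame ι V) (v₀ : V) (h : List V) : V :=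
  Classical.choose (exists_lim (fun N => G.bimove v₀ N h))

lemma limStrat_mem (G : QRGame ι V) (v₀ : V) (h : List V) :
    {N | G.bimove v₀ N h = G.limStrat v₀ h} ∈ UF :=
  Classical.choose_spec (exists_lim (fun N => G.bimove v₀ N h))

lemma limStrat_agree_mem (G : QRGame ι V) (v₀ : V) (M : ℕ) :
    {N | ∀ h : List V, h.length ≤ M → G.bimove v₀ N h = G.limStrat v₀ h} ∈ UF := by
  have hfin : {l : List V | l.length ≤ M}.Finite := List.finite_length_le V M
  have h1 : (⋂ h ∈ {l : List V | l.length ≤ M},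
      {N | G.bimove v₀ N h = G.limStrat v₀ h}) ∈ UF :=
    (Filter.biInter_mem hfin).mpr fun h _ => G.limStrat_mem v₀ h
  refine Filter.mem_of_superset h1 ?_
  intro N hN
  simp only [Set.mem_iInter, Set.mem_setOf_eq] at hN ⊢
  exact fun h hh => hN h hh

lemma exists_good (G : QRGame ι V) (v₀ : V) (M K : ℕ) :
    ∃ N : ℕ, K ≤ N ∧ ∀ h : List V, h.length ≤ M → G.bimove v₀ N h = G.limStrat v₀ h := by
  have h1 : {N : ℕ | K ≤ N} ∈ UF := UF_le_atTop (Filter.mem_atTop K)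
  have h2 := Filter.inter_mem h1 (G.limStrat_agree_mem v₀ M)
  obtain ⟨N, hN1, hN2⟩ := Filter.nonempty_of_mem h2
  exact ⟨N, hN1, hN2⟩

lemma limStrat_edge (G : QRGame ι V) (v₀ : V) (h : List V) :
    G.E (cur v₀ h) (G.limStrat v₀ h) := by
  obtain ⟨N, hN⟩ := Filter.nonempty_of_mem (G.limStrat_mem v₀ h)
  rw [← hN]
  exact G.bimove_edge v₀ N h

end QRGame

/-- In every multiplayer quantitative reachability game, there exists a
subgame perfect equilibrium. -/
theorem exists_subgame_perfect_equilibrium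
    {ι V : Type} [Fintype ι] [Fintype V] [DecidableEq ι]
    (G : QRGame ι V) (v₀ : V) :
    ∃ σ : ι → List V → V, G.IsProfile v₀ σ ∧ G.IsSPE v₀ σ := by
  classical
  refine ⟨fun _ : ι => G.limStrat v₀, ?_, ?_⟩
  · intro i h hh _
    exact G.limStrat_edge v₀ h
  · intro h hh j σ' hσ'
    set σ : ι → List V → V := fun _ : ι => G.limStrat v₀ with hσdef
    by_cases hd : G.cost j (G.fullPlay v₀ (Function.update σ j σ') h) = ⊤
    · rw [hd]; exact le_top
    · obtain ⟨d₀, hd₀⟩ := WithTop.ne_top_iff_exists.mp hd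
      have hcostle : G.cost j (G.fullPlay v₀ (Function.update σ j σ') h) ≤ (d₀ : ℕ∞) :=
        le_of_eq hd₀.symm
      obtain ⟨l, hld, hlmem⟩ := G.exists_le_of_cost_le hcostle
      set M : ℕ := h.length + d₀ + 1 with hM
      obtain ⟨N, hNK, hNag⟩ := G.exists_good v₀ M (M + 1)
      have hne : h ≠ [] := hh.ne_nil
      set σN : ι → List V → V := fun _ : ι => G.bimove v₀ N with hσN
      have hag1 : ∀ (i : ι) (l : List V), l.length ≤ M → σN i l = σ i l :=
        fun i l hl => hNag l hl
      have hag2 : ∀ (i : ι) (l : List V), l.length ≤ M →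
          (Function.update σN j σ') i l = (Function.update σ j σ') i l := by
        intro i l hl
        by_cases hij : i = j
        · subst hij; simp [Function.update_self]
        · rw [Function.update_of_ne hij, Function.update_of_ne hij]
          exact hag1 i l hl
      have hmemN : G.fullPlay v₀ (Function.update σN j σ') h l ∈ G.F j := by
        rw [QRGame.fullPlay_congr hag2 h (by omega)]
        exact hlmem
      have hlN : l < N := by omega
      have c1 : G.costLT j (G.fullPlay v₀ (Function.update σN j σ') h) N ≤ (l : ℕ∞) :=
        G.costLT_le hlN hmemN
      have c2 : G.costLT j (G.fullPlay v₀ σN h) N ≤ (l : ℕ∞) :=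
        (G.nashN v₀ N j σ' hσ' N h hh (by omega)).trans c1
      obtain ⟨l', hl'l, hl'N, hmem'⟩ := G.exists_le_of_costLT_le c2
      have hmemσ : G.fullPlay v₀ σ h l' ∈ G.F j := by
        rw [← QRGame.fullPlay_congr hag1 h (by omega)]
        exact hmem'
      calc G.cost j (G.fullPlay v₀ σ h) ≤ (l' : ℕ∞) := G.cost_le hmemσ
        _ ≤ (d₀ : ℕ∞) := by exact_mod_cast (show l' ≤ d₀ by omega)
        _ = _ := hd₀
end

section
/- (Kuhn's theorem.) Let 𝒯 be a finite tree and 𝒢 a multiplayer quantitative reachability game played on 𝒯, and for each player i ∈ Π let ⪯_i be a preference relation (a total, reflexive, transitive binary relation) on cost profiles in (ℕ ∪ {+∞})^Π. Then there exists a strategy profile (σ_i)_{i∈Π} such that for every history hv of 𝒢, every player j ∈ Π, and every strategy σ'_j of player j, Cost(h⟨σ'_j|_h, σ_{-j}|_h⟩_v) ⪯_j Cost(h⟨(σ_i|_h)_{i∈Π}⟩_v). -/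
open scoped Classical ENat

/-- A multiplayer quantitative reachability game played on a finite tree.
The tree is given by its (finite) set of nodes, a root, and a parent function;
every node reaches the root by iterating `parent`.  Each node is owned by a
player, and each player `i` has a goal set `F i` of nodes. -/
structure TreeGame (ι N : Type) where
  root : N
  parent : N → N
  parent_root : parent root = root
  acc : ∀ n : N, ∃ k : ℕ, parent^[k] n = root
  owner : N → ι
  F : ι → Set N

namespace TreeGame

variable {ι N : Type}

/-- `c` is a child of `m` in the tree. -/
def IsChild (T : TreeGame ι N) (m c : N) : Prop := T.parent c = m ∧ c ≠ T.root

/-- A strategy of player `i`: to every node of player `i` that has a child, it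
assigns a child of that node.  (In a tree, histories correspond to nodes.) -/
def IsStrat (T : TreeGame ι N) (i : ι) (σ : N → N) : Prop :=
  ∀ n : N, T.owner n = i → (∃ c, T.IsChild n c) → T.IsChild n (σ n)

/-- One step of the play: at a non-leaf node, its owner moves according to the
profile `σ`; leaves are repeated forever. -/
noncomputable def step (T : TreeGame ι N) (σ : ι → N → N) (n : N) : N :=
  if ∃ c, T.IsChild n c then σ (T.owner n) n else n

/-- Depth of a node: the length of the path from the root to it. -/
noncomputable def depth (T : TreeGame ι N) (n : N) : ℕ := Nat.find (T.acc n)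

/-- The full play (from the root) going through the node `v` and following the
profile `σ` from `v` on: its first `depth v` steps follow the unique path from
the root to `v`, and afterwards it is consistent with `σ`. -/
noncomputable def playThrough (T : TreeGame ι N) (σ : ι → N → N) (v : N) (t : ℕ) : N :=
  if t ≤ T.depth v then T.parent^[T.depth v - t] v
  else (T.step σ)^[t - T.depth v] v

/-- Cost of player `i` for a play: the least `l` such that the `l`-th node of
the play is in `F i`, and `⊤` if there is no such `l`. -/
noncomputable def cost (T : TreeGame ι N) (i : ι) (ρ : ℕ → N) : ℕ∞ :=
  ⨅ l ∈ {l : ℕ | ρ l ∈ T.F i}, (l : ℕ∞)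

end TreeGame

set_option linter.unusedSectionVars false

section Helpers

variable {ι N : Type} [Fintype ι] [Fintype N] (T : TreeGame ι N)

lemma TG_depth_spec (n : N) : T.parent^[T.depth n] n = T.root := Nat.find_spec (T.acc n)

lemma TG_depth_min {n : N} {k : ℕ} (hk : k < T.depth n) : T.parent^[k] n ≠ T.root :=
  Nat.find_min (T.acc n) hk

lemma TG_depth_child {n c : N} (h : T.IsChild n c) : T.depth c = T.depth n + 1 := by
  have h1 : T.parent^[T.depth n + 1] c = T.root := by
    rw [Function.iterate_succ_apply, h.1]; exact TG_depth_spec T n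
  refine (Nat.find_eq_iff (T.acc c)).mpr ⟨h1, ?_⟩
  intro m hm
  match m with
  | 0 => simpa using h.2
  | m + 1 =>
    intro hc
    rw [Function.iterate_succ_apply, h.1] at hc
    exact TG_depth_min T (by omega) hc

lemma TG_depth_lt_card (n : N) : T.depth n < Fintype.card N := by
  have key : ∀ a b : ℕ, a < b → b ≤ T.depth n → T.parent^[a] n ≠ T.parent^[b] n := by
    intro a b hab hb heq
    have h1 : T.parent^[T.depth n - b + a] n = T.root := by
      have h2 : T.parent^[T.depth n - b + b] n = T.root := by
        rw [Nat.sub_add_cancel hb]; exact TG_depth_spec T n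
      rw [Function.iterate_add_apply] at h2 ⊢
      rw [heq]; exact h2
    exact TG_depth_min T (by omega) h1
  have hinj : Function.Injective (fun k : Fin (T.depth n + 1) => T.parent^[(k : ℕ)] n) := by
    intro a b hab
    rcases Nat.lt_trichotomy (a : ℕ) (b : ℕ) with h | h | h
    · exact absurd hab (key a b h (by omega))
    · exact Fin.ext h
    · exact absurd hab.symm (key b a h (by omega))
  have := Fintype.card_le_of_injective _ hinj
  simp only [Fintype.card_fin] at this
  omega

lemma TG_step_child {τ : ι → N → N} (hτ : ∀ i, T.IsStrat i (τ i)) {n : N}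
    (h : ∃ c, T.IsChild n c) : T.IsChild n (T.step τ n) := by
  rw [TreeGame.step, if_pos h]; exact hτ (T.owner n) n rfl h

lemma TG_depth_le_iterate {τ : ι → N → N} (hτ : ∀ i, T.IsStrat i (τ i)) (n : N) (k : ℕ) :
    T.depth n ≤ T.depth ((T.step τ)^[k] n) := by
  induction k with
  | zero => rfl
  | succ k ih =>
    rw [Function.iterate_succ_apply']
    refine le_trans ih ?_
    set w := (T.step τ)^[k] n
    by_cases hc : ∃ c, T.IsChild w c
    · have := TG_depth_child T (TG_step_child T hτ hc); omega
    · rw [TreeGame.step, if_neg hc]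

lemma TG_playThrough_congr {τ₁ τ₂ : ι → N → N} (hτ₁ : ∀ i, T.IsStrat i (τ₁ i)) (d : ℕ)
    (hag : ∀ i n, d ≤ T.depth n → τ₁ i n = τ₂ i n) {v : N} (hv : d ≤ T.depth v) :
    T.playThrough τ₁ v = T.playThrough τ₂ v := by
  have hst : ∀ k, (T.step τ₁)^[k] v = (T.step τ₂)^[k] v := by
    intro k
    induction k with
    | zero => rfl
    | succ k ih =>
      rw [Function.iterate_succ_apply', Function.iterate_succ_apply', ← ih]
      set w := (T.step τ₁)^[k] v with hw
      have hdw : d ≤ T.depth w := le_trans hv (TG_depth_le_iterate T hτ₁ v k)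
      by_cases hc : ∃ c, T.IsChild w c
      · rw [TreeGame.step, TreeGame.step, if_pos hc, if_pos hc, hag _ _ hdw]
      · rw [TreeGame.step, TreeGame.step, if_neg hc, if_neg hc]
  funext t
  rw [TreeGame.playThrough, TreeGame.playThrough]
  by_cases ht : t ≤ T.depth v
  · rw [if_pos ht, if_pos ht]
  · rw [if_neg ht, if_neg ht, hst]

lemma TG_playThrough_step {τ : ι → N → N} (hτ : ∀ i, T.IsStrat i (τ i)) {v : N}
    (hcv : ∃ c, T.IsChild v c) : T.playThrough τ v = T.playThrough τ (T.step τ v) := by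
  have hc : T.IsChild v (T.step τ v) := TG_step_child T hτ hcv
  have hdc : T.depth (T.step τ v) = T.depth v + 1 := TG_depth_child T hc
  funext t
  rw [TreeGame.playThrough, TreeGame.playThrough, hdc]
  rcases Nat.lt_trichotomy t (T.depth v + 1) with h | h | h
  · have h1 : t ≤ T.depth v := by omega
    rw [if_pos h1, if_pos (by omega : t ≤ T.depth v + 1)]
    have h2 : T.depth v + 1 - t = (T.depth v - t) + 1 := by omega
    rw [h2, Function.iterate_succ_apply, hc.1]
  · rw [if_neg (by omega), if_pos (by omega)]
    have h2 : t - T.depth v = 1 := by omega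
    have h3 : T.depth v + 1 - t = 0 := by omega
    rw [h2, h3]
    simp
  · rw [if_neg (by omega), if_neg (by omega)]
    have h2 : t - T.depth v = (t - (T.depth v + 1)) + 1 := by omega
    rw [h2, Function.iterate_succ_apply]

lemma TG_playThrough_leaf {v : N} (h : ¬ ∃ c, T.IsChild v c) (τ₁ τ₂ : ι → N → N) :
    T.playThrough τ₁ v = T.playThrough τ₂ v := by
  have hs : ∀ (τ : ι → N → N) (k : ℕ), (T.step τ)^[k] v = v := by
    intro τ k
    induction k with
    | zero => rfl
    | succ k ih => rw [Function.iterate_succ_apply', ih, TreeGame.step, if_neg h]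
  funext t
  rw [TreeGame.playThrough, TreeGame.playThrough]
  by_cases ht : t ≤ T.depth v
  · rw [if_pos ht, if_pos ht]
  · rw [if_neg ht, if_neg ht, hs, hs]

lemma exists_max_pref {α β : Type*} (r : β → β → Prop) (htotal : ∀ x y, r x y ∨ r y x)
    (htrans : ∀ x y z, r x y → r y z → r x z) (s : Finset α) (hs : s.Nonempty) (f : α → β) :
    ∃ m ∈ s, ∀ x ∈ s, r (f x) (f m) := by
  classical
  induction s using Finset.induction_on with
  | empty => exact absurd hs (by simp)
  | @insert a t ha ih =>
    have hrefl : ∀ x, r x x := fun x => (htotal x x).elim id id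
    by_cases ht : t.Nonempty
    · obtain ⟨m, hm, hmax⟩ := ih ht
      rcases htotal (f a) (f m) with hr | hr
      · exact ⟨m, Finset.mem_insert_of_mem hm, fun x hx => by
          rcases Finset.mem_insert.mp hx with rfl | hx
          · exact hr
          · exact hmax x hx⟩
      · exact ⟨a, Finset.mem_insert_self a t, fun x hx => by
          rcases Finset.mem_insert.mp hx with rfl | hx
          · exact hrefl _
          · exact htrans _ _ _ (hmax x hx) hr⟩
    · refine ⟨a, Finset.mem_insert_self a t, fun x hx => ?_⟩
      rcases Finset.mem_insert.mp hx with rfl | hx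
      · exact hrefl _
      · exact absurd ⟨x, hx⟩ ht

end Helpers

section Main

variable {ι N : Type} [Fintype ι] [Fintype N] [DecidableEq ι]

lemma kuhn_aux (T : TreeGame ι N)
    (pref : ι → (ι → ℕ∞) → (ι → ℕ∞) → Prop)
    (htotal : ∀ j x y, pref j x y ∨ pref j y x)
    (hrefl : ∀ j x, pref j x x)
    (htrans : ∀ j x y z, pref j x y → pref j y z → pref j x z) (k : ℕ) :
    ∃ σ : ι → N → N, (∀ i, T.IsStrat i (σ i)) ∧
      ∀ (v : N) (j : ι) (σ' : N → N), T.IsStrat j σ' →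
        Fintype.card N - T.depth v ≤ k →
        pref j (fun i => T.cost i (T.playThrough (Function.update σ j σ') v))
          (fun i => T.cost i (T.playThrough σ v)) := by
  induction k with
  | zero =>
    refine ⟨fun _ n => if h : ∃ c, T.IsChild n c then h.choose else n, ?_, ?_⟩
    · intro i n _ hc
      simp only [dif_pos hc]
      exact hc.choose_spec
    · intro v j σ' _ hle
      have := TG_depth_lt_card T v
      omega
  | succ k ih =>
    obtain ⟨σ, hσ, hk⟩ := ih
    set d := Fintype.card N - (k + 1) with hd_def
    -- best-child choice at depth-d nodes
    have hmax : ∀ n : N, (∃ c, T.IsChild n c) → ∃ c₀, T.IsChild n c₀ ∧ ∀ c, T.IsChild n c →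
        pref (T.owner n) (fun i => T.cost i (T.playThrough σ c))
          (fun i => T.cost i (T.playThrough σ c₀)) := by
      intro n hn
      obtain ⟨c, hc⟩ := hn
      have hne : (Finset.univ.filter (fun c => T.IsChild n c)).Nonempty :=
        ⟨c, by simpa using hc⟩
      obtain ⟨m, hm, hmax⟩ := exists_max_pref (pref (T.owner n)) (htotal _) (htrans _)
        (Finset.univ.filter (fun c => T.IsChild n c)) hne
        (fun c => fun i => T.cost i (T.playThrough σ c))
      refine ⟨m, by simpa using hm, fun c hc => hmax c (by simpa using hc)⟩
    let B : N → N := fun n => if h : ∃ c, T.IsChild n c then (hmax n h).choose else n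
    let σ' : ι → N → N := fun i n => if T.depth n = d then B n else σ i n
    have hBchild : ∀ n (h : ∃ c, T.IsChild n c), T.IsChild n (B n) := by
      intro n h
      simp only [B, dif_pos h]
      exact (hmax n h).choose_spec.1
    have hBmax : ∀ n (h : ∃ c, T.IsChild n c) (c : N), T.IsChild n c →
        pref (T.owner n) (fun i => T.cost i (T.playThrough σ c))
          (fun i => T.cost i (T.playThrough σ (B n))) := by
      intro n h c hc
      simp only [B, dif_pos h]
      exact (hmax n h).choose_spec.2 c hc
    have hσ' : ∀ i, T.IsStrat i (σ' i) := by
      intro i n hown hc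
      by_cases hdn : T.depth n = d
      · simpa only [σ', if_pos hdn] using hBchild n hc
      · simpa only [σ', if_neg hdn] using hσ i n hown hc
    have hagree : ∀ i n, d + 1 ≤ T.depth n → σ' i n = σ i n := by
      intro i n hn
      simp only [σ', if_neg (by omega : ¬ T.depth n = d)]
    have hcard : 0 < Fintype.card N := Fintype.card_pos_iff.mpr ⟨T.root⟩
    refine ⟨σ', hσ', ?_⟩
    intro v j σ'' hstr hle
    have hτ : ∀ i, T.IsStrat i (Function.update σ' j σ'' i) := by
      intro i
      by_cases hij : i = j
      · subst hij; simpa using hstr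
      · simpa [Function.update_of_ne hij] using hσ' i
    have hτσ : ∀ i, T.IsStrat i (Function.update σ j σ'' i) := by
      intro i
      by_cases hij : i = j
      · subst hij; simpa using hstr
      · simpa [Function.update_of_ne hij] using hσ i
    have hagreeτ : ∀ i n, d + 1 ≤ T.depth n →
        Function.update σ' j σ'' i n = Function.update σ j σ'' i n := by
      intro i n hn
      by_cases hij : i = j
      · subst hij; simp
      · simp [Function.update_of_ne hij, hagree i n hn]
    have hdlt := TG_depth_lt_card T v
    by_cases hvd : d + 1 ≤ T.depth v
    · -- transfer from IH
      have h1 : T.playThrough (Function.update σ' j σ'') v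
          = T.playThrough (Function.update σ j σ'') v :=
        TG_playThrough_congr T hτ (d + 1) hagreeτ hvd
      have h2 : T.playThrough σ' v = T.playThrough σ v :=
        TG_playThrough_congr T hσ' (d + 1) hagree hvd
      rw [h1, h2]
      exact hk v j σ'' hstr (by omega)
    · have hveq : T.depth v = d := by omega
      by_cases hcv : ∃ c, T.IsChild v c
      · set τ := Function.update σ' j σ'' with hτdef
        set c := T.step τ v with hcdef
        have hc : T.IsChild v c := TG_step_child T hτ hcv
        have hdc : T.depth c = d + 1 := by rw [TG_depth_child T hc, hveq]
        have h1 : T.playThrough τ v = T.playThrough τ c := TG_playThrough_step T hτ hcv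
        have h2 : T.playThrough τ c = T.playThrough (Function.update σ j σ'') c :=
          TG_playThrough_congr T hτ (d + 1) hagreeτ (by omega)
        have h3 := hk c j σ'' hstr (by omega)
        have hstepσ' : T.step σ' v = B v := by
          rw [TreeGame.step, if_pos hcv]
          simp only [σ', if_pos hveq]
        have hb : T.IsChild v (B v) := hBchild v hcv
        have hdb : T.depth (B v) = d + 1 := by rw [TG_depth_child T hb, hveq]
        have h5 : T.playThrough σ' v = T.playThrough σ' (B v) := by
          rw [TG_playThrough_step T hσ' hcv, hstepσ']
        have h6 : T.playThrough σ' (B v) = T.playThrough σ (B v) :=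
          TG_playThrough_congr T hσ' (d + 1) hagree (by omega)
        rw [h1, h2, h5, h6]
        by_cases how : T.owner v = j
        · have hcmp := hBmax v hcv c hc
          rw [how] at hcmp
          exact htrans j _ _ _ h3 hcmp
        · have hcb : c = B v := by
            rw [hcdef, TreeGame.step, if_pos hcv, hτdef,
              Function.update_of_ne how]
            simp only [σ', if_pos hveq]
          rw [hcb] at h3 ⊢
          exact h3
      · rw [TG_playThrough_leaf T hcv (Function.update σ' j σ'') σ']
        exact hrefl j _

end Main



/-- Kuhn's theorem: in a multiplayer quantitative reachability game played on a
finite tree, for any family of preference relations `⪯_j` (total, reflexive and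
transitive relations on cost profiles), there is a strategy profile `σ` such
that for every history (i.e. node) `v`, every player `j` and every deviation
`σ'` of player `j` after `v`, the resulting cost profile is `⪯_j` the cost
profile of the play through `v` following `σ`. -/
theorem kuhn_theorem
    {ι N : Type} [Fintype ι] [Fintype N] [DecidableEq ι]
    (T : TreeGame ι N)
    (pref : ι → (ι → ℕ∞) → (ι → ℕ∞) → Prop)
    (htotal : ∀ j x y, pref j x y ∨ pref j y x)
    (hrefl : ∀ j x, pref j x x)
    (htrans : ∀ j x y z, pref j x y → pref j y z → pref j x z) :
    ∃ σ : ι → N → N, (∀ i, T.IsStrat i (σ i)) ∧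
      ∀ (v : N) (j : ι) (σ' : N → N), T.IsStrat j σ' →
        pref j (fun i => T.cost i (T.playThrough (Function.update σ j σ') v))
          (fun i => T.cost i (T.playThrough σ v)) := by
  have := kuhn_aux T pref htotal hrefl htrans (Fintype.card N)
  obtain ⟨σ, hσ, hk⟩ := this
  exact ⟨σ, hσ, fun v j σ' hs => hk v j σ' hs (Nat.sub_le _ _)⟩
end

section
/- Let (G, v₀) be a multiplayer quantitative reachability game, T the unraveling of G from v₀, and d ∈ ℕ. Then there exists a subgame perfect secure equilibrium in the finite truncated game 𝒯^d. -/
open scoped Classical ENat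

/-- The preference relation `≺_j` of player `j` on cost profiles:
`x ≺_j y` iff `x j > y j`, or `x j = y j`, every player's cost does not
decrease, and some player's cost strictly increases. -/
def Prec {ι : Type} (j : ι) (x y : ι → ℕ∞) : Prop :=
  y j < x j ∨ (x j = y j ∧ (∀ i, x i ≤ y i) ∧ ∃ i, x i < y i)

namespace QRGame

variable {ι V : Type} [DecidableEq ι]

/-- `σ` restricted after the history `h` is a secure equilibrium in the subgame
`(G|_h, cur h)`: no player `j` has a `≺_j`-profitable deviation after `h`
(costs are computed on the whole play, including the prefix `h`). -/
def IsSecureAfter (G : QRGame ι V) (v₀ : V) (σ : ι → List V → V) (h : List V) : Prop :=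
  ¬ ∃ (j : ι) (σ' : List V → V), G.IsStrat v₀ j σ' ∧
      Prec j (fun i => G.cost i (G.fullPlay v₀ σ h))
        (fun i => G.cost i (G.fullPlay v₀ (Function.update σ j σ') h))

/-- A secure equilibrium in `(G, v₀)`. -/
def IsSecure (G : QRGame ι V) (v₀ : V) (σ : ι → List V → V) : Prop :=
  G.IsSecureAfter v₀ σ [v₀]

/-- A subgame perfect secure equilibrium: a secure equilibrium in every subgame. -/
def IsSPSE (G : QRGame ι V) (v₀ : V) (σ : ι → List V → V) : Prop :=
  ∀ h : List V, G.IsHist v₀ h → G.IsSecureAfter v₀ σ h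

end QRGame

namespace QRGame

variable {ι V : Type}

/-- `σ` is a valid strategy of player `i` in the truncated game `𝒯^d` played on
the truncation of the unraveling of `G` to depth `d`: it chooses a successor
along an edge on every history of length (number of edges) `< d`, i.e. on every
history whose list of vertices has length `≤ d`. -/
def IsStratTrunc (G : QRGame ι V) (v₀ : V) (d : ℕ) (i : ι) (σ : List V → V) : Prop :=
  ∀ h : List V, G.IsHist v₀ h → h.length ≤ d →
    G.owner (cur v₀ h) = i → G.E (cur v₀ h) (σ h)

end QRGame

namespace QRGame

variable {ι V : Type} [DecidableEq ι]

/-- `σ` restricted after the history `h` is a secure equilibrium in the subgame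
of the truncated game `𝒯^d` after `h`: costs are computed on the prefix of the
play of length `d` (vertices of indices `0, …, d`). -/
def IsSecureTruncAfter (G : QRGame ι V) (v₀ : V) (d : ℕ)
    (σ : ι → List V → V) (h : List V) : Prop :=
  ¬ ∃ (j : ι) (σ' : List V → V), G.IsStratTrunc v₀ d j σ' ∧
      Prec j (fun i => G.costLT i (G.fullPlay v₀ σ h) (d + 1))
        (fun i => G.costLT i (G.fullPlay v₀ (Function.update σ j σ') h) (d + 1))

/-- A secure equilibrium in the truncated game `𝒯^d`. -/
def IsSecureTrunc (G : QRGame ι V) (v₀ : V) (d : ℕ) (σ : ι → List V → V) : Prop :=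
  G.IsSecureTruncAfter v₀ d σ [v₀]

/-- A subgame perfect secure equilibrium in the truncated game `𝒯^d`: a secure
equilibrium in the subgame after every history of the truncated tree. -/
def IsSPSETrunc (G : QRGame ι V) (v₀ : V) (d : ℕ) (σ : ι → List V → V) : Prop :=
  ∀ h : List V, G.IsHist v₀ h → h.length ≤ d + 1 → G.IsSecureTruncAfter v₀ d σ h

end QRGame

namespace SPSEProof

open QRGame Finset

variable {ι V : Type} [Fintype ι] [Fintype V] [DecidableEq ι]

/-- truncation of an extended natural to a natural, capped at `d+1`. -/
noncomputable def ee (d : ℕ) (t : ℕ∞) : ℕ := (min t ((d+1 : ℕ) : ℕ∞)).toNat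

lemma ee_top (d : ℕ) : ee d ⊤ = d + 1 := by
  rw [ee, min_eq_right le_top, ENat.toNat_coe]

lemma ee_coe (d m : ℕ) : ee d (m : ℕ∞) = min m (d+1) := by
  rw [ee, show (min ↑m ((d+1:ℕ):ℕ∞)) = ((min m (d+1) : ℕ) : ℕ∞) by exact_mod_cast rfl,
    ENat.toNat_coe]

lemma ee_le (d : ℕ) (t : ℕ∞) : ee d t ≤ d + 1 := by
  cases t with
  | top => rw [ee_top]
  | coe m => rw [ee_coe]; omega

lemma ee_mono {d : ℕ} {t s : ℕ∞} (h : t ≤ s) : ee d t ≤ ee d s := by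
  cases t with
  | top => cases s with
    | top => exact le_rfl
    | coe m => exact absurd h (by simp)
  | coe m => cases s with
    | top => rw [ee_top, ee_coe]; omega
    | coe k =>
      have : m ≤ k := by exact_mod_cast h
      rw [ee_coe, ee_coe]; omega

lemma ee_lt {d : ℕ} {t s : ℕ∞} (ht : t ≤ (d : ℕ∞)) (h : t < s) : ee d t < ee d s := by
  cases t with
  | top => exact absurd h (by simp)
  | coe m =>
    have hm : m ≤ d := by exact_mod_cast ht
    cases s with
    | top => rw [ee_top, ee_coe]; omega
    | coe k =>
      have : m < k := by exact_mod_cast h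
      rw [ee_coe, ee_coe]; omega

/-- Combined payoff player `j` wants to minimize. -/
noncomputable def Uval (G : QRGame ι V) (d : ℕ) (j : ι) (x : ι → ℕ∞) : ℕ :=
  ee d (x j) * (Fintype.card ι * (d+1) + 1)
    + (Fintype.card ι * (d+1) - ∑ i ∈ Finset.univ.erase j, ee d (x i))

lemma sum_ee_le (G : QRGame ι V) (d : ℕ) (j : ι) (x : ι → ℕ∞) :
    ∑ i ∈ Finset.univ.erase j, ee d (x i) ≤ Fintype.card ι * (d+1) := by
  calc ∑ i ∈ Finset.univ.erase j, ee d (x i)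
      ≤ (Finset.univ.erase j).card • (d+1) :=
        Finset.sum_le_card_nsmul _ _ _ (fun i _ => ee_le d (x i))
    _ ≤ Fintype.card ι * (d+1) := by
        have h1 : (Finset.univ.erase j).card ≤ Fintype.card ι :=
          le_trans (Finset.card_erase_le) (le_of_eq Finset.card_univ)
        simpa [smul_eq_mul] using Nat.mul_le_mul_right (d+1) h1

/-- A `Prec j`-improvement strictly decreases `Uval j`. -/
lemma prec_uval {G : QRGame ι V} {d : ℕ} {j : ι} {x y : ι → ℕ∞}
    (hx : ∀ i, x i ≠ ⊤ → x i ≤ (d : ℕ∞)) (hy : ∀ i, y i ≠ ⊤ → y i ≤ (d : ℕ∞))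
    (hp : Prec j x y) : Uval G d j y < Uval G d j x := by
  unfold Uval
  set K := Fintype.card ι * (d+1) + 1 with hK
  have hSy := sum_ee_le G d j y
  have hSx := sum_ee_le G d j x
  rcases hp with h1 | ⟨he, hle, i₀, hlt⟩
  · -- y j < x j
    have hyt : y j ≠ ⊤ := fun ht => not_top_lt (ht ▸ h1)
    have h2 : ee d (y j) < ee d (x j) := ee_lt (hy j hyt) h1
    have h3 : ee d (y j) * K + K ≤ ee d (x j) * K := by
      calc ee d (y j) * K + K = (ee d (y j) + 1) * K := by ring
        _ ≤ ee d (x j) * K := Nat.mul_le_mul_right K h2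
    omega
  · -- equal for j, someone strictly worse
    have hij : i₀ ≠ j := fun hh => by rw [hh, he] at hlt; exact lt_irrefl _ hlt
    have hx0 : x i₀ ≠ ⊤ := fun ht => not_top_lt (ht ▸ hlt)
    have hsum : ∑ i ∈ Finset.univ.erase j, ee d (x i)
        < ∑ i ∈ Finset.univ.erase j, ee d (y i) :=
      Finset.sum_lt_sum (fun i _ => ee_mono (hle i))
        ⟨i₀, by simp [hij], ee_lt (hx i₀ hx0) hlt⟩
    have hej : ee d (y j) = ee d (x j) := by rw [he]
    rw [hej]
    omega

end SPSEProof

namespace SPSEProof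

open QRGame

variable {ι V : Type} [Fintype ι] [Fintype V] [DecidableEq ι]

lemma isHist_ne_nil {G : QRGame ι V} {v₀ : V} {h : List V} (hh : G.IsHist v₀ h) :
    h ≠ [] := by
  intro hn; rw [hn] at hh; exact hh

lemma isHist_cons {G : QRGame ι V} {v₀ : V} {h : List V} {w : V}
    (he : G.E (cur v₀ h) w) (hh : G.IsHist v₀ h) : G.IsHist v₀ (w :: h) := by
  cases h with
  | nil => exact hh.elim
  | cons v t => exact ⟨he, hh⟩

/-- The successors of a vertex, as a finset. -/
noncomputable def succs (G : QRGame ι V) (c : V) : Finset V :=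
  Finset.univ.filter (fun w => G.E c w)

lemma mem_succs {G : QRGame ι V} {c w : V} : w ∈ succs G c ↔ G.E c w := by
  simp [succs]

lemma succs_nonempty (G : QRGame ι V) (c : V) : (succs G c).Nonempty := by
  obtain ⟨w, hw⟩ := G.total c
  exact ⟨w, mem_succs.2 hw⟩

/-- Cost profile read off a finite (reversed) history. -/
noncomputable def prof (G : QRGame ι V) (v₀ : V) (d : ℕ) (hh : List V) (i : ι) : ℕ∞ :=
  G.costLT i (fun t => hh.reverse.getD t v₀) (d+1)

/-- Backward-induction extension of a history to a maximal history of the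
truncated game: at each step the owner of the current vertex picks a successor
minimizing their combined payoff `Uval`. -/
noncomputable def ext (G : QRGame ι V) (v₀ : V) (d : ℕ) (h : List V) : List V :=
  if hl : d + 1 ≤ h.length then h
  else
    ext G v₀ d ((Finset.exists_min_image (succs G (cur v₀ h))
      (fun w => Uval G d (G.owner (cur v₀ h)) (prof G v₀ d (ext G v₀ d (w :: h))))
      (succs_nonempty G (cur v₀ h))).choose :: h)
termination_by d + 1 - h.length
decreasing_by all_goals (simp [List.length_cons]; omega)

/-- The backward-induction choice at a history. -/
noncomputable def bestStep (G : QRGame ι V) (v₀ : V) (d : ℕ) (h : List V) : V :=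
  (Finset.exists_min_image (succs G (cur v₀ h))
    (fun w => Uval G d (G.owner (cur v₀ h)) (prof G v₀ d (ext G v₀ d (w :: h))))
    (succs_nonempty G (cur v₀ h))).choose

lemma bestStep_spec (G : QRGame ι V) (v₀ : V) (d : ℕ) (h : List V) :
    bestStep G v₀ d h ∈ succs G (cur v₀ h) ∧
    ∀ w ∈ succs G (cur v₀ h),
      Uval G d (G.owner (cur v₀ h)) (prof G v₀ d (ext G v₀ d (bestStep G v₀ d h :: h)))
        ≤ Uval G d (G.owner (cur v₀ h)) (prof G v₀ d (ext G v₀ d (w :: h))) :=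
  (Finset.exists_min_image (succs G (cur v₀ h))
    (fun w => Uval G d (G.owner (cur v₀ h)) (prof G v₀ d (ext G v₀ d (w :: h))))
    (succs_nonempty G (cur v₀ h))).choose_spec

lemma bestStep_edge (G : QRGame ι V) (v₀ : V) (d : ℕ) (h : List V) :
    G.E (cur v₀ h) (bestStep G v₀ d h) :=
  mem_succs.1 (bestStep_spec G v₀ d h).1

lemma ext_of_ge {G : QRGame ι V} {v₀ : V} {d : ℕ} {h : List V}
    (hl : d + 1 ≤ h.length) : ext G v₀ d h = h := by
  rw [ext, dif_pos hl]

lemma ext_of_lt {G : QRGame ι V} {v₀ : V} {d : ℕ} {h : List V}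
    (hl : ¬ d + 1 ≤ h.length) :
    ext G v₀ d h = ext G v₀ d (bestStep G v₀ d h :: h) := by
  rw [ext, dif_neg hl]; rfl

/-- The backward-induction strategy profile. -/
noncomputable def bi (G : QRGame ι V) (v₀ : V) (d : ℕ) : ι → List V → V :=
  fun _ => bestStep G v₀ d

lemma histFrom_add (G : QRGame ι V) (v₀ : V) (τ : ι → List V → V) (h : List V)
    (n m : ℕ) :
    G.histFrom v₀ τ h (n + m) = G.histFrom v₀ τ (G.histFrom v₀ τ h m) n := by
  induction n with
  | zero => rw [Nat.zero_add]; rfl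
  | succ n ih =>
    have h1 : n + 1 + m = (n + m) + 1 := by omega
    rw [h1]
    simp only [QRGame.histFrom, ih]

lemma histFrom_length (G : QRGame ι V) (v₀ : V) (τ : ι → List V → V) (h : List V)
    (n : ℕ) : (G.histFrom v₀ τ h n).length = h.length + n := by
  induction n with
  | zero => rfl
  | succ n ih => simp only [QRGame.histFrom, List.length_cons, ih]; omega

lemma histFrom_append (G : QRGame ι V) (v₀ : V) (τ : ι → List V → V) (h : List V)
    (n : ℕ) : ∃ a, G.histFrom v₀ τ h n = a ++ h := by
  induction n with
  | zero => exact ⟨[], rfl⟩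
  | succ n ih =>
    obtain ⟨a, ha⟩ := ih
    exact ⟨_ :: a, by simp only [QRGame.histFrom, ha]; rfl⟩

lemma getD_histFrom_mono {G : QRGame ι V} {v₀ : V} {τ : ι → List V → V} {h : List V}
    {t n n' : ℕ} (hnn : n ≤ n') (h1 : t < h.length + n) :
    (G.histFrom v₀ τ h n').reverse.getD t v₀ = (G.histFrom v₀ τ h n).reverse.getD t v₀ := by
  obtain ⟨a, ha⟩ := histFrom_append G v₀ τ (G.histFrom v₀ τ h n) (n' - n)
  rw [show n' = (n' - n) + n from (Nat.sub_add_cancel hnn).symm, histFrom_add, ha,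
    List.reverse_append]
  exact List.getD_append _ _ _ _ (by rw [List.length_reverse, histFrom_length]; omega)

lemma getD_histFrom_stable {G : QRGame ι V} {v₀ : V} {τ : ι → List V → V} {h : List V}
    {t n n' : ℕ} (h1 : t < h.length + n) (h2 : t < h.length + n') :
    (G.histFrom v₀ τ h n).reverse.getD t v₀ = (G.histFrom v₀ τ h n').reverse.getD t v₀ := by
  rcases le_total n n' with hle | hle
  · rw [getD_histFrom_mono hle h1]
  · rw [getD_histFrom_mono hle h2]

lemma fullPlay_eq {G : QRGame ι V} {v₀ : V} {τ : ι → List V → V} {h : List V}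
    (hne : h ≠ []) {t n : ℕ} (h1 : t < h.length + n) :
    G.fullPlay v₀ τ h t = (G.histFrom v₀ τ h n).reverse.getD t v₀ := by
  have hpos : 0 < h.length := List.length_pos_iff.2 hne
  exact getD_histFrom_stable (by omega) h1

lemma fullPlay_cons {G : QRGame ι V} {v₀ : V} {τ : ι → List V → V} {h : List V}
    (hne : h ≠ []) (t : ℕ) :
    G.fullPlay v₀ τ h t = G.fullPlay v₀ τ (τ (G.owner (cur v₀ h)) h :: h) t := by
  have hpos : 0 < h.length := List.length_pos_iff.2 hne
  have hstep : τ (G.owner (cur v₀ h)) h :: h = G.histFrom v₀ τ h 1 := rfl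
  rw [hstep]
  show G.fullPlay v₀ τ h t = (G.histFrom v₀ τ (G.histFrom v₀ τ h 1) t).reverse.getD t v₀
  rw [← histFrom_add]
  exact getD_histFrom_stable (by omega) (by omega)

lemma costLT_congr {G : QRGame ι V} {i : ι} {m : ℕ} {ρ ρ' : ℕ → V}
    (hh : ∀ l < m, ρ l = ρ' l) : G.costLT i ρ m = G.costLT i ρ' m := by
  unfold QRGame.costLT
  refine iInf_congr fun l => iInf_congr_Prop ?_ (fun _ => rfl)
  constructor
  · rintro ⟨h1, h2⟩; exact ⟨h1, (hh l h1) ▸ h2⟩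
  · rintro ⟨h1, h2⟩; exact ⟨h1, (hh l h1).symm ▸ h2⟩

lemma costLT_range (G : QRGame ι V) (i : ι) (ρ : ℕ → V) (d : ℕ) :
    G.costLT i ρ (d+1) ≠ ⊤ → G.costLT i ρ (d+1) ≤ (d : ℕ∞) := by
  intro hne
  rcases em (∃ l, l < d + 1 ∧ ρ l ∈ G.F i) with ⟨l, hl, hf⟩ | hno
  · calc G.costLT i ρ (d+1) ≤ (l : ℕ∞) := iInf₂_le l ⟨hl, hf⟩
      _ ≤ (d : ℕ∞) := by exact_mod_cast Nat.lt_succ_iff.1 hl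
  · exact absurd (le_antisymm le_top (le_iInf₂ fun l hl => (hno ⟨l, hl.1, hl.2⟩).elim)) hne

lemma ext_histFrom (G : QRGame ι V) (v₀ : V) (d : ℕ) :
    ∀ n (h : List V), h.length + n = d + 1 →
      ext G v₀ d h = G.histFrom v₀ (bi G v₀ d) h n := by
  intro n
  induction n with
  | zero => intro h hl; rw [ext_of_ge (by omega)]; rfl
  | succ n ih =>
    intro h hl
    rw [ext_of_lt (by omega), ih (bestStep G v₀ d h :: h) (by simp; omega)]
    rw [histFrom_add G v₀ (bi G v₀ d) h n 1]; rfl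

lemma costLT_bi {G : QRGame ι V} {v₀ : V} {d : ℕ} {h : List V}
    (hh : G.IsHist v₀ h) (hlen : h.length ≤ d + 1) (i : ι) :
    G.costLT i (G.fullPlay v₀ (bi G v₀ d) h) (d+1) = prof G v₀ d (ext G v₀ d h) i := by
  have hne := isHist_ne_nil hh
  have hpos : 0 < h.length := List.length_pos_iff.2 hne
  rw [prof, ext_histFrom G v₀ d (d + 1 - h.length) h (by omega)]
  exact costLT_congr fun l hl => fullPlay_eq hne (by omega)

lemma key (G : QRGame ι V) (v₀ : V) (d : ℕ) :
    ∀ n (h : List V), G.IsHist v₀ h → h.length + n = d + 1 →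
      ∀ (j : ι) (σ' : List V → V), G.IsStratTrunc v₀ d j σ' →
        Uval G d j (fun i => G.costLT i (G.fullPlay v₀ (bi G v₀ d) h) (d+1)) ≤
        Uval G d j
          (fun i => G.costLT i (G.fullPlay v₀ (Function.update (bi G v₀ d) j σ') h) (d+1)) := by
  intro n
  induction n with
  | zero =>
    intro h hh hl j σ' hs
    have hne := isHist_ne_nil hh
    refine le_of_eq (congrArg (Uval G d j) (funext fun i => ?_))
    refine costLT_congr fun l hlm => ?_
    rw [fullPlay_eq hne (n := 0) (by omega), fullPlay_eq hne (n := 0) (by omega)]; rfl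
  | succ n ih =>
    intro h hh hl j σ' hs
    have hne := isHist_ne_nil hh
    have hpos : 0 < h.length := List.length_pos_iff.2 hne
    by_cases hij : G.owner (cur v₀ h) = j
    · -- the owner of the current vertex is the deviating player
      have hE' : G.E (cur v₀ h) (σ' h) := hs h hh (by omega) hij
      have hh' : G.IsHist v₀ (σ' h :: h) := isHist_cons hE' hh
      have hupd : Function.update (bi G v₀ d) j σ' (G.owner (cur v₀ h)) h = σ' h := by
        rw [hij]; simp
      calc Uval G d j (fun i => G.costLT i (G.fullPlay v₀ (bi G v₀ d) h) (d+1))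
          = Uval G d j (prof G v₀ d (ext G v₀ d h)) := by
            exact congrArg _ (funext fun i => costLT_bi hh (by omega) i)
        _ = Uval G d j (prof G v₀ d (ext G v₀ d (bestStep G v₀ d h :: h))) := by
            rw [ext_of_lt (by omega)]
        _ ≤ Uval G d j (prof G v₀ d (ext G v₀ d (σ' h :: h))) := by
            have := (bestStep_spec G v₀ d h).2 (σ' h) (mem_succs.2 hE')
            rwa [hij] at this
        _ = Uval G d j (fun i => G.costLT i (G.fullPlay v₀ (bi G v₀ d) (σ' h :: h)) (d+1)) := by
            exact (congrArg _ (funext fun i => costLT_bi hh' (by simp; omega) i)).symm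
        _ ≤ Uval G d j (fun i =>
              G.costLT i (G.fullPlay v₀ (Function.update (bi G v₀ d) j σ') (σ' h :: h)) (d+1)) :=
            ih (σ' h :: h) hh' (by simp; omega) j σ' hs
        _ = Uval G d j (fun i =>
              G.costLT i (G.fullPlay v₀ (Function.update (bi G v₀ d) j σ') h) (d+1)) := by
            refine congrArg _ (funext fun i => ?_)
            refine (costLT_congr fun l hlm => ?_).symm
            rw [fullPlay_cons hne l, hupd]
    · -- the owner is not the deviating player
      have hE : G.E (cur v₀ h) (bestStep G v₀ d h) := bestStep_edge G v₀ d h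
      have hh' : G.IsHist v₀ (bestStep G v₀ d h :: h) := isHist_cons hE hh
      have hupd : Function.update (bi G v₀ d) j σ' (G.owner (cur v₀ h)) h
          = bestStep G v₀ d h := by
        rw [Function.update_of_ne hij]; rfl
      have h1 : ∀ i, G.costLT i (G.fullPlay v₀ (bi G v₀ d) h) (d+1)
          = G.costLT i (G.fullPlay v₀ (bi G v₀ d) (bestStep G v₀ d h :: h)) (d+1) :=
        fun i => costLT_congr fun l hlm => fullPlay_cons hne l
      have h2 : ∀ i, G.costLT i (G.fullPlay v₀ (Function.update (bi G v₀ d) j σ') h) (d+1)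
          = G.costLT i (G.fullPlay v₀ (Function.update (bi G v₀ d) j σ')
              (bestStep G v₀ d h :: h)) (d+1) :=
        fun i => costLT_congr fun l hlm => by rw [fullPlay_cons hne l, hupd]
      rw [show (fun i => G.costLT i (G.fullPlay v₀ (bi G v₀ d) h) (d+1)) = _ from funext h1,
        show (fun i => G.costLT i (G.fullPlay v₀ (Function.update (bi G v₀ d) j σ') h) (d+1))
          = _ from funext h2]
      exact ih (bestStep G v₀ d h :: h) hh' (by simp; omega) j σ' hs

end SPSEProof

/-- For every multiplayer quantitative reachability game `(G, v₀)` and every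
depth `d`, there exists a subgame perfect secure equilibrium in the finite game
`𝒯^d` played on the truncation of the unraveling of `G` from `v₀` to depth `d`. -/
theorem exists_spse_truncated
    {ι V : Type} [Fintype ι] [Fintype V] [DecidableEq ι]
    (G : QRGame ι V) (v₀ : V) (d : ℕ) :
    ∃ σ : ι → List V → V, (∀ i, G.IsStratTrunc v₀ d i (σ i)) ∧
      G.IsSPSETrunc v₀ d σ := by
  refine ⟨SPSEProof.bi G v₀ d, fun i h hh hlen ho => SPSEProof.bestStep_edge G v₀ d h, ?_⟩
  intro h hh hlen
  rintro ⟨j, σ', hs, hp⟩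
  have hkey := SPSEProof.key G v₀ d (d + 1 - h.length) h hh
    (by have := List.length_pos_iff.2 (SPSEProof.isHist_ne_nil hh); omega) j σ' hs
  have hU := SPSEProof.prec_uval (G := G) (d := d)
    (fun i => SPSEProof.costLT_range G i _ d) (fun i => SPSEProof.costLT_range G i _ d) hp
  exact absurd hU (not_lt.2 hkey)
end

section
/- Let 𝒢 = (V, V₁, V₂, E, c) be a qualitative two-player zero-sum weak parity game. Then for every vertex v ∈ V, one of the two players has a memoryless winning strategy from v; in particular, 𝒢 is determined. -/
open scoped Classical

/-- A qualitative two-player zero-sum weak parity game: a finite directed graph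
whose vertices are partitioned between player 1 (`owner v = true`) and player 2
(`owner v = false`), every vertex has an outgoing edge, and `c` is a coloring
function. -/
structure WPGame (V : Type) where
  owner : V → Bool
  E : V → V → Prop
  total : ∀ v, ∃ w, E v w
  c : V → ℕ

namespace WPGame

variable {V : Type}

/-- `ρ` is a play from `v`. -/
def IsPlay (G : WPGame V) (v : V) (ρ : ℕ → V) : Prop :=
  ρ 0 = v ∧ ∀ k, G.E (ρ k) (ρ (k + 1))

/-- The maximal color occurring along the play `ρ`. -/
noncomputable def maxColor (G : WPGame V) (ρ : ℕ → V) : ℕ :=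
  sSup (Set.range fun k => G.c (ρ k))

/-- Player 1 wins the play `ρ` iff the maximal color seen along `ρ` is even
(otherwise player 2 wins it). -/
def Wins1 (G : WPGame V) (ρ : ℕ → V) : Prop := Even (G.maxColor ρ)

/-- `f` is a valid memoryless strategy (it moves along edges). -/
def MLValid (G : WPGame V) (f : V → V) : Prop := ∀ v, G.E v (f v)

/-- The play `ρ` is consistent with the memoryless strategy `f` of the player
`p` (`p = true` is player 1, `p = false` is player 2). -/
def ConsistentML (G : WPGame V) (p : Bool) (f : V → V) (ρ : ℕ → V) : Prop :=
  ∀ k, G.owner (ρ k) = p → ρ (k + 1) = f (ρ k)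

end WPGame

/- ### Auxiliary development: attractors and determinacy by induction on colors -/

namespace WPGame

variable {V : Type} (G : WPGame V)

/-- Approximations of the attractor of player `p` to the target `T` inside `U`. -/
def attrStep (p : Bool) (U T : Set V) : ℕ → Set V
  | 0 => T ∩ U
  | (m+1) => attrStep p U T m ∪
      {v | v ∈ U ∧ ((G.owner v = p ∧ ∃ w, G.E v w ∧ w ∈ attrStep p U T m) ∨
        (G.owner v ≠ p ∧ ∀ w, w ∈ U → G.E v w → w ∈ attrStep p U T m))}

/-- The attractor of player `p` to the target `T` inside `U`. -/
def attr (p : Bool) (U T : Set V) : Set V := {v | ∃ m, v ∈ G.attrStep p U T m}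

/-- Rank of a vertex in the attractor. -/
noncomputable def rank (p : Bool) (U T : Set V) (v : V) : ℕ :=
  sInf {m | v ∈ G.attrStep p U T m}

variable {G}
variable {p : Bool} {U T : Set V}

lemma attrStep_zero : G.attrStep p U T 0 = T ∩ U := rfl

lemma attrStep_succ (m : ℕ) : G.attrStep p U T (m+1) = G.attrStep p U T m ∪
    {v | v ∈ U ∧ ((G.owner v = p ∧ ∃ w, G.E v w ∧ w ∈ G.attrStep p U T m) ∨
      (G.owner v ≠ p ∧ ∀ w, w ∈ U → G.E v w → w ∈ G.attrStep p U T m))} := rfl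

lemma attrStep_mono {m m' : ℕ} (h : m ≤ m') :
    G.attrStep p U T m ⊆ G.attrStep p U T m' := by
  obtain ⟨k, rfl⟩ := Nat.le.dest h
  clear h
  induction k with
  | zero => exact subset_rfl
  | succ k ih => exact ih.trans Set.subset_union_left

lemma attrStep_subset_U : ∀ m, G.attrStep p U T m ⊆ U := by
  intro m
  induction m with
  | zero => exact Set.inter_subset_right
  | succ m ih => exact Set.union_subset ih (fun v hv => hv.1)

lemma attr_subset_U : G.attr p U T ⊆ U := by
  rintro v ⟨m, hm⟩
  exact attrStep_subset_U m hm

lemma mem_rank {v : V} (h : v ∈ G.attr p U T) :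
    v ∈ G.attrStep p U T (G.rank p U T v) := Nat.sInf_mem h

lemma rank_le {v : V} {m : ℕ} (h : v ∈ G.attrStep p U T m) :
    G.rank p U T v ≤ m := Nat.sInf_le h

lemma attr_cases {v : V} (hv : v ∈ G.attr p U T) (h0 : v ∉ G.attrStep p U T 0) :
    (G.owner v = p → ∃ w, G.E v w ∧ w ∈ G.attr p U T ∧
      G.rank p U T w < G.rank p U T v) ∧
    (G.owner v ≠ p → ∀ w, w ∈ U → G.E v w → w ∈ G.attr p U T ∧
      G.rank p U T w < G.rank p U T v) := by
  have hm := mem_rank hv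
  obtain ⟨s, hs⟩ : ∃ s, G.rank p U T v = s + 1 := by
    cases h : G.rank p U T v with
    | zero => exact absurd (h ▸ hm) h0
    | succ s => exact ⟨s, rfl⟩
  rw [hs, attrStep_succ] at hm
  have hns : v ∉ G.attrStep p U T s := fun hmem =>
    absurd (rank_le hmem) (by rw [hs]; omega)
  rcases hm with hm | ⟨hvU, hcase⟩
  · exact absurd hm hns
  constructor
  · intro hop
    rcases hcase with ⟨_, w, hE, hwm⟩ | ⟨hne, _⟩
    · exact ⟨w, hE, ⟨s, hwm⟩, lt_of_le_of_lt (rank_le hwm) (by omega)⟩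
    · exact absurd hop hne
  · intro hop
    rcases hcase with ⟨heq, _⟩ | ⟨_, hall⟩
    · exact absurd heq hop
    · intro w hwU hE
      exact ⟨⟨s, hall w hwU hE⟩, lt_of_le_of_lt (rank_le (hall w hwU hE)) (by omega)⟩

lemma maxColor_eq {G : WPGame V} {ρ : ℕ → V} {n : ℕ}
    (hle : ∀ k, G.c (ρ k) ≤ n) (hex : ∃ j, G.c (ρ j) = n) :
    G.maxColor ρ = n := by
  obtain ⟨j, hj⟩ := hex
  refine le_antisymm (csSup_le (Set.range_nonempty _) ?_) (le_csSup ⟨n, ?_⟩ ⟨j, hj⟩)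
  · rintro x ⟨k, rfl⟩; exact hle k
  · rintro x ⟨k, rfl⟩; exact hle k

/-- Main induction: determinacy with memoryless strategies on subarenas,
by induction on a strict bound `n` on the colors. -/
lemma det [Fintype V] (G : WPGame V) :
    ∀ (n : ℕ) (U : Set V), (∀ v ∈ U, ∃ w, G.E v w ∧ w ∈ U) → (∀ v ∈ U, G.c v < n) →
    ∃ (W : Bool → Set V) (f : Bool → V → V),
      (W true ∪ W false = U) ∧ (∀ q, G.MLValid (f q)) ∧ (∀ q, ∀ v ∈ U, f q v ∈ U) ∧
      (∀ q (ρ : ℕ → V), ρ 0 ∈ W q → (∀ k, G.E (ρ k) (ρ (k+1))) → (∀ k, ρ k ∈ U) →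
        G.ConsistentML q (f q) ρ → (Even (G.maxColor ρ) ↔ q = true)) := by
  intro n
  induction n with
  | zero =>
    intro U hsub hcol
    refine ⟨fun _ => ∅, fun _ v => (G.total v).choose, ?_, ?_, ?_, ?_⟩
    · have : U = ∅ := Set.eq_empty_of_forall_notMem fun v hv => Nat.not_lt_zero _ (hcol v hv)
      simp [this]
    · intro q v; exact (G.total v).choose_spec
    · intro q v hv; exact absurd (hcol v hv) (Nat.not_lt_zero _)
    · intro q ρ h0; exact absurd h0 (Set.notMem_empty _)
  | succ n ih =>
    intro U hsub hcol
    set p : Bool := decide (Even n) with hp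
    set T : Set V := {v | v ∈ U ∧ G.c v = n} with hT
    set A : Set V := G.attr p U T with hA
    have hAU : A ⊆ U := attr_subset_U
    have hMex : ∃ M, ∀ w, w ∈ A → w ∈ G.attrStep p U T M := by
      refine ⟨Finset.univ.sup (G.rank p U T), fun w hw => ?_⟩
      exact attrStep_mono (Finset.le_sup (Finset.mem_univ w)) (mem_rank hw)
    obtain ⟨M, hM⟩ := hMex
    have hescape : ∀ v, v ∈ U → G.owner v = p → ∀ w, G.E v w → w ∈ A → v ∈ A := by
      rintro v hvU hop w hE ⟨m, hm⟩
      exact ⟨m+1, Or.inr ⟨hvU, Or.inl ⟨hop, w, hE, hm⟩⟩⟩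
    have hsub' : ∀ v ∈ U \ A, ∃ w, G.E v w ∧ w ∈ U \ A := by
      rintro v ⟨hvU, hvA⟩
      by_cases hop : G.owner v = p
      · obtain ⟨w, hE, hwU⟩ := hsub v hvU
        exact ⟨w, hE, hwU, fun hwA => hvA (hescape v hvU hop w hE hwA)⟩
      · by_contra hcon
        push_neg at hcon
        apply hvA
        refine ⟨M+1, Or.inr ⟨hvU, Or.inr ⟨hop, fun w hwU hE => ?_⟩⟩⟩
        have hwA : w ∈ A := by
          by_contra hwA'
          exact (hcon w hE ⟨hwU, hwA'⟩ : False)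
        exact hM w hwA
    have hcol' : ∀ v ∈ U \ A, G.c v < n := by
      rintro v ⟨hvU, hvA⟩
      have h1 : G.c v < n + 1 := hcol v hvU
      rcases Nat.lt_succ_iff_lt_or_eq.mp h1 with h | h
      · exact h
      · exact absurd (⟨0, ⟨⟨hvU, h⟩, hvU⟩⟩ : v ∈ A) hvA
    obtain ⟨W', f', hWU', hvalid', hmaps', hwin'⟩ := ih (U \ A) hsub' hcol'
    have hW'sub : ∀ q, W' q ⊆ U \ A := by
      intro q
      rw [← hWU']
      cases q
      · exact Set.subset_union_right
      · exact Set.subset_union_left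
    have strat_ex : ∀ v, v ∈ A → G.owner v = p → v ∉ G.attrStep p U T 0 →
        ∃ w, G.E v w ∧ w ∈ A ∧ G.rank p U T w < G.rank p U T v :=
      fun v hv hop h0 => (attr_cases hv h0).1 hop
    set f : Bool → V → V := fun q v =>
      if h : v ∈ A ∧ G.owner v = p ∧ v ∉ G.attrStep p U T 0 then
        (strat_ex v h.1 h.2.1 h.2.2).choose
      else if v ∈ U \ A then f' q v
      else if h2 : v ∈ U then (hsub v h2).choose
      else (G.total v).choose
      with hf
    have hf_attr : ∀ v, v ∈ A → G.owner v = p → v ∉ G.attrStep p U T 0 →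
        G.E v (f p v) ∧ f p v ∈ A ∧ G.rank p U T (f p v) < G.rank p U T v := by
      intro v h1 h2 h3
      simp only [hf]
      rw [dif_pos ⟨h1, h2, h3⟩]
      exact (strat_ex v h1 h2 h3).choose_spec
    have hf_diff : ∀ q v, v ∈ U \ A → f q v = f' q v := by
      intro q v hv
      simp only [hf]
      rw [dif_neg (fun h => hv.2 h.1), if_pos hv]
    have hfvalid : ∀ q, G.MLValid (f q) := by
      intro q v
      simp only [hf]
      split_ifs with h1 h2 h3
      · exact (strat_ex v h1.1 h1.2.1 h1.2.2).choose_spec.1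
      · exact hvalid' q v
      · exact (hsub v h3).choose_spec.1
      · exact (G.total v).choose_spec
    have hfmaps : ∀ q, ∀ v ∈ U, f q v ∈ U := by
      intro q v hv
      simp only [hf]
      split_ifs with h1 h2
      · exact hAU (strat_ex v h1.1 h1.2.1 h1.2.2).choose_spec.2.1
      · exact (hmaps' q v h2).1
      · exact (hsub v hv).choose_spec.2
    have reach : ∀ (ρ : ℕ → V), (∀ k, G.E (ρ k) (ρ (k+1))) → (∀ k, ρ k ∈ U) →
        G.ConsistentML p (f p) ρ → ∀ m k, ρ k ∈ A → G.rank p U T (ρ k) ≤ m →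
        ∃ j, ρ j ∈ T := by
      intro ρ hedge hU hcons m
      induction m with
      | zero =>
        intro k hk hr
        have h0 : ρ k ∈ G.attrStep p U T 0 := by
          have h := mem_rank hk
          rwa [Nat.le_zero.mp hr] at h
        exact ⟨k, h0.1⟩
      | succ m ihm =>
        intro k hk hr
        by_cases h0 : ρ k ∈ G.attrStep p U T 0
        · exact ⟨k, h0.1⟩
        · by_cases hop : G.owner (ρ k) = p
          · have hnext : ρ (k+1) = f p (ρ k) := hcons k hop
            obtain ⟨hE, hA2, hlt⟩ := hf_attr (ρ k) hk hop h0
            refine ihm (k+1) (hnext ▸ hA2) ?_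
            rw [hnext]; omega
          · obtain ⟨hA2, hlt⟩ := (attr_cases hk h0).2 hop (ρ (k+1)) (hU (k+1)) (hedge k)
            exact ihm (k+1) hA2 (by omega)
    set W : Bool → Set V := fun q => if q = p then A ∪ W' q else W' q with hWdef
    refine ⟨W, f, ?_, hfvalid, hfmaps, ?_⟩
    · -- union
      have hAcup : A ∪ (U \ A) = U := Set.union_diff_cancel hAU
      by_cases hpt : p = true
      · have e1 : W true = A ∪ W' true := by simp [hWdef, hpt]
        have e2 : W false = W' false := by simp [hWdef, hpt]
        rw [e1, e2, Set.union_assoc, hWU', hAcup]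
      · have hpf : p = false := Bool.eq_false_iff.mpr hpt
        have e1 : W true = W' true := by simp [hWdef, hpf]
        have e2 : W false = A ∪ W' false := by simp [hWdef, hpf]
        rw [e1, e2, Set.union_left_comm, hWU', hAcup]
    · intro q ρ h0 hedge hUρ hcons
      by_cases hq : q = p
      · subst hq
        by_cases hTex : ∃ j, ρ j ∈ T
        · have hmax : G.maxColor ρ = n := by
            refine maxColor_eq (fun k => Nat.lt_succ_iff.mp (hcol _ (hUρ k))) ?_
            obtain ⟨j, hj⟩ := hTex
            exact ⟨j, hj.2⟩
          rw [hmax, hp]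
          exact (decide_eq_true_iff).symm
        · push_neg at hTex
          have hnA : ∀ k, ρ k ∉ A := by
            intro k hk
            obtain ⟨j, hj⟩ := reach ρ hedge hUρ hcons _ k hk le_rfl
            exact hTex j hj
          have hUρ' : ∀ k, ρ k ∈ U \ A := fun k => ⟨hUρ k, hnA k⟩
          have h0' : ρ 0 ∈ W' p := by
            have e : W p = A ∪ W' p := by simp [hWdef]
            rw [e] at h0
            rcases h0 with h0 | h0
            · exact absurd h0 (hnA 0)
            · exact h0
          have hcons' : G.ConsistentML p (f' p) ρ := by
            intro k hk
            rw [hcons k hk, hf_diff p (ρ k) (hUρ' k)]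
          exact hwin' p ρ h0' hedge hUρ' hcons'
      · have hWq : W q = W' q := by simp [hWdef, hq]
        rw [hWq] at h0
        have hUρ' : ∀ k, ρ k ∈ U \ A := by
          intro k
          induction k with
          | zero => exact hW'sub q h0
          | succ k ihk =>
            refine ⟨hUρ (k+1), ?_⟩
            by_cases hop : G.owner (ρ k) = q
            · have hnext := hcons k hop
              rw [hnext, hf_diff q (ρ k) ihk]
              exact (hmaps' q (ρ k) ihk).2
            · have hop' : G.owner (ρ k) = p := by
                rcases Bool.eq_false_or_eq_true (G.owner (ρ k)) with hb | hb <;>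
                  rcases Bool.eq_false_or_eq_true p with hb2 | hb2 <;>
                  rcases Bool.eq_false_or_eq_true q with hb3 | hb3 <;>
                  rw [hb, hb2] <;> rw [hb3] at hop <;> rw [hb2, hb3] at hq <;>
                  first | rfl | exact absurd rfl hq | exact absurd hb hop
              intro hA1
              exact ihk.2 (hescape (ρ k) ihk.1 hop' (ρ (k+1)) (hedge k) hA1)
        have hcons' : G.ConsistentML q (f' q) ρ := by
          intro k hk
          rw [hcons k hk, hf_diff q (ρ k) (hUρ' k)]
        exact hwin' q ρ h0 hedge hUρ' hcons'

end WPGame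

/-- In a qualitative two-player zero-sum weak parity game, from every vertex
one of the two players has a memoryless winning strategy (in particular, the
game is determined). -/
theorem weak_parity_memoryless_determinacy
    {V : Type} [Fintype V] (G : WPGame V) (v : V) :
    (∃ f : V → V, G.MLValid f ∧
        ∀ ρ : ℕ → V, G.IsPlay v ρ → G.ConsistentML true f ρ → G.Wins1 ρ) ∨
    (∃ f : V → V, G.MLValid f ∧
        ∀ ρ : ℕ → V, G.IsPlay v ρ → G.ConsistentML false f ρ → ¬ G.Wins1 ρ) := by
  obtain ⟨W, f, hWU, hvalid, hmaps, hwin⟩ := G.det (Finset.univ.sup G.c + 1) Set.univ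
    (fun v _ => ⟨(G.total v).choose, (G.total v).choose_spec, trivial⟩)
    (fun v _ => Nat.lt_succ_of_le (Finset.le_sup (Finset.mem_univ v)))
  have hv : v ∈ W true ∪ W false := hWU ▸ Set.mem_univ v
  rcases hv with h | h
  · left
    refine ⟨f true, hvalid true, fun ρ hplay hcons => ?_⟩
    have hwin1 := hwin true ρ (hplay.1 ▸ h) hplay.2 (fun k => trivial) hcons
    exact hwin1.mpr rfl
  · right
    refine ⟨f false, hvalid false, fun ρ hplay hcons hw => ?_⟩
    have hwin2 := hwin false ρ (hplay.1 ▸ h) hplay.2 (fun k => trivial) hcons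
    simpa using hwin2.mp hw
end

section
/- Let (σ_i)_{i∈Π} be a secure equilibrium in a multiplayer quantitative reachability game (G, v₀), with outcome ρ; let D = max{Cost_i(ρ) : i ∈ Π, Cost_i(ρ) < +∞} + |V|. Then (σ_i) is dev-optimal if and only if for every player j ∈ Π and every strategy σ'_j of player j, writing ρ' = ⟨σ'_j, σ_{-j}⟩_{v₀}, if (1) Cost_j(ρ) = Cost_j(ρ'), (2) for all i ∈ Π with Cost_i(ρ) < +∞ one has Cost_i(ρ) ≤ Cost_i(ρ'), and (3) there exists i ∈ Π with Cost_i(ρ) < Cost_i(ρ'), then there exists l ∈ Π such that Cost_l(ρ) = +∞ and Cost_l(ρ') < D. -/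
open scoped Classical ENat

namespace QRGame

variable {ι V : Type} [Fintype V]

/-- A strategy profile with outcome `ρ` is goal-optimal (with bound `Γ`) if
every goal set visited by `ρ` is visited before depth `Γ`. -/
noncomputable def GoalOpt (G : QRGame ι V) (v₀ : V) (σ : ι → List V → V) (Γ : ℕ) : Prop :=
  ∀ i, G.cost i (G.outcome v₀ σ) ≠ ⊤ → G.cost i (G.outcome v₀ σ) < (Γ : ℕ∞)

/-- The bound `D = max{Cost_i(ρ) : Cost_i(ρ) < +∞} + |V|` attached to a play `ρ`. -/
noncomputable def devBound (G : QRGame ι V) (ρ : ℕ → V) : ℕ :=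
  (⨆ i ∈ {i : ι | G.cost i ρ ≠ ⊤}, G.cost i ρ).toNat + Fintype.card V

variable [DecidableEq ι]

/-- A secure equilibrium with outcome `ρ` is dev-optimal if for every player
`j` and deviation `σ'_j` (with resulting play `ρ'`), the cost profile of the
prefix `ρ_{<D}` is not `≺_j` the cost profile of the prefix `ρ'_{<D}`, where
`D = max{Cost_i(ρ) : Cost_i(ρ) < +∞} + |V|`. -/
noncomputable def DevOpt (G : QRGame ι V) (v₀ : V) (σ : ι → List V → V) : Prop :=
  ∀ (j : ι) (σ' : List V → V), G.IsStrat v₀ j σ' →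
    ¬ Prec j
        (fun i => G.costLT i (G.outcome v₀ σ) (G.devBound (G.outcome v₀ σ)))
        (fun i => G.costLT i (G.outcome v₀ (Function.update σ j σ'))
          (G.devBound (G.outcome v₀ σ)))

end QRGame

section Aux

lemma iInf_coe_lt_iff (S : Set ℕ) (m : ℕ) :
    (⨅ l ∈ S, (l : ℕ∞)) < (m : ℕ∞) ↔ ∃ l ∈ S, l < m := by
  constructor
  · intro h
    by_contra hc
    push_neg at hc
    exact absurd (le_iInf₂ fun l hl => Nat.cast_le.mpr (hc l hl)) (not_le.mpr h)
  · rintro ⟨l, hl, hlm⟩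
    exact lt_of_le_of_lt (iInf₂_le l hl) (Nat.cast_lt.mpr hlm)

namespace QRGame

variable {ι V : Type}

lemma costLT_eq_cost (G : QRGame ι V) (i : ι) (ρ : ℕ → V) (m : ℕ)
    (h : G.cost i ρ < (m : ℕ∞)) : G.costLT i ρ m = G.cost i ρ := by
  have hex : ∃ l ∈ {l : ℕ | ρ l ∈ G.F i}, l < m := (iInf_coe_lt_iff _ _).mp h
  obtain ⟨l₀, hl₀, hmin⟩ := (wellFounded_lt (α := ℕ)).has_min {l : ℕ | ρ l ∈ G.F i}
    ⟨hex.choose, hex.choose_spec.1⟩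
  have hl₀m : l₀ < m := by
    obtain ⟨l, hl, hlm⟩ := hex
    exact lt_of_le_of_lt (not_lt.mp (hmin l hl)) hlm
  unfold QRGame.costLT QRGame.cost
  apply le_antisymm
  · calc (⨅ l ∈ {l : ℕ | l < m ∧ ρ l ∈ G.F i}, (l : ℕ∞)) ≤ (l₀ : ℕ∞) :=
          iInf₂_le l₀ ⟨hl₀m, hl₀⟩
      _ ≤ ⨅ l ∈ {l : ℕ | ρ l ∈ G.F i}, (l : ℕ∞) :=
          le_iInf₂ fun l hl => Nat.cast_le.mpr (not_lt.mp (hmin l hl))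
  · exact le_iInf₂ fun l hl => iInf₂_le l hl.2

lemma costLT_eq_top (G : QRGame ι V) (i : ι) (ρ : ℕ → V) (m : ℕ)
    (h : ¬ G.cost i ρ < (m : ℕ∞)) : G.costLT i ρ m = ⊤ := by
  have hno : ∀ l ∈ {l : ℕ | ρ l ∈ G.F i}, ¬ l < m := by
    intro l hl hlm
    exact h ((iInf_coe_lt_iff _ _).mpr ⟨l, hl, hlm⟩)
  unfold QRGame.costLT
  exact eq_top_iff.mpr (le_iInf₂ fun l hl => absurd hl.1 (hno l hl.2))

lemma cost_lt_devBound [Fintype ι] [Fintype V] (G : QRGame ι V) (ρ : ℕ → V)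
    (hV : 0 < Fintype.card V) (i : ι) (hi : G.cost i ρ ≠ ⊤) :
    G.cost i ρ < (G.devBound ρ : ℕ∞) := by
  set T := ⨆ j ∈ {j : ι | G.cost j ρ ≠ ⊤}, G.cost j ρ with hT
  have hTle : T ≤ ((Finset.univ.sup fun j => (G.cost j ρ).toNat : ℕ) : ℕ∞) := by
    refine iSup₂_le fun j hj => ?_
    conv_lhs => rw [← ENat.coe_toNat hj]
    exact_mod_cast Finset.le_sup (f := fun j => (G.cost j ρ).toNat) (Finset.mem_univ j)
  have hTne : T ≠ ⊤ := ne_top_of_le_ne_top (ENat.coe_ne_top _) hTle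
  have hxT : G.cost i ρ ≤ T := le_iSup₂ (f := fun j _ => G.cost j ρ) i hi
  have h1 : G.cost i ρ ≤ (T.toNat : ℕ∞) := by rwa [ENat.coe_toNat hTne]
  have h2 : T.toNat < G.devBound ρ := by
    unfold QRGame.devBound
    rw [← hT]
    exact Nat.lt_add_of_pos_right hV
  exact lt_of_le_of_lt h1 (Nat.cast_lt.mpr h2)

end QRGame

end Aux

/-- Characterization of dev-optimality: a secure equilibrium `σ` with outcome
`ρ` is dev-optimal iff for every player `j` and every deviation `σ'_j` with
resulting play `ρ'`, whenever (1) `Cost_j(ρ) = Cost_j(ρ')`, (2) every finite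
cost does not decrease, and (3) some cost strictly increases, there is a player
`l` with `Cost_l(ρ) = +∞` and `Cost_l(ρ') < D`, where
`D = max{Cost_i(ρ) : Cost_i(ρ) < +∞} + |V|`. -/
theorem devopt_characterization
    {ι V : Type} [Fintype ι] [Fintype V] [DecidableEq ι]
    (G : QRGame ι V) (v₀ : V) (σ : ι → List V → V)
    (hprof : G.IsProfile v₀ σ) (hsec : G.IsSecure v₀ σ) :
    G.DevOpt v₀ σ ↔
      ∀ (j : ι) (σ' : List V → V), G.IsStrat v₀ j σ' →
        (G.cost j (G.outcome v₀ σ)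
            = G.cost j (G.outcome v₀ (Function.update σ j σ')) ∧
          (∀ i, G.cost i (G.outcome v₀ σ) ≠ ⊤ →
            G.cost i (G.outcome v₀ σ)
              ≤ G.cost i (G.outcome v₀ (Function.update σ j σ'))) ∧
          ∃ i, G.cost i (G.outcome v₀ σ)
              < G.cost i (G.outcome v₀ (Function.update σ j σ'))) →
        ∃ l, G.cost l (G.outcome v₀ σ) = ⊤ ∧
          G.cost l (G.outcome v₀ (Function.update σ j σ'))
            < (G.devBound (G.outcome v₀ σ) : ℕ∞) := by
  classical
  have hVpos : 0 < Fintype.card V := Fintype.card_pos_iff.mpr ⟨v₀⟩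
  have hfin : ∀ i, G.cost i (G.outcome v₀ σ) ≠ ⊤ →
      G.cost i (G.outcome v₀ σ) < (G.devBound (G.outcome v₀ σ) : ℕ∞) :=
    fun i hi => G.cost_lt_devBound _ hVpos i hi
  have hxLT : (fun i => G.costLT i (G.outcome v₀ σ) (G.devBound (G.outcome v₀ σ)))
      = fun i => G.cost i (G.outcome v₀ σ) := by
    funext i
    by_cases hi : G.cost i (G.outcome v₀ σ) = ⊤
    · rw [G.costLT_eq_top i _ _ (by rw [hi]; exact not_top_lt), hi]
    · exact G.costLT_eq_cost i _ _ (hfin i hi)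
  constructor
  · intro hdev j σ' hσ' h
    obtain ⟨h1, h2, h3⟩ := h
    by_contra hc
    push_neg at hc
    refine hdev j σ' hσ' ?_
    rw [hxLT]
    refine Or.inr ⟨?_, ?_, ?_⟩
    · show G.cost j (G.outcome v₀ σ)
        = G.costLT j (G.outcome v₀ (Function.update σ j σ')) (G.devBound (G.outcome v₀ σ))
      by_cases h : G.cost j (G.outcome v₀ (Function.update σ j σ'))
          < (G.devBound (G.outcome v₀ σ) : ℕ∞)
      · rw [G.costLT_eq_cost j _ _ h]; exact h1
      · rw [G.costLT_eq_top j _ _ h]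
        by_contra hxj
        exact h (by rw [← h1]; exact hfin j hxj)
    · intro i
      show G.cost i (G.outcome v₀ σ)
        ≤ G.costLT i (G.outcome v₀ (Function.update σ j σ')) (G.devBound (G.outcome v₀ σ))
      by_cases h : G.cost i (G.outcome v₀ (Function.update σ j σ'))
          < (G.devBound (G.outcome v₀ σ) : ℕ∞)
      · rw [G.costLT_eq_cost i _ _ h]
        by_cases hi : G.cost i (G.outcome v₀ σ) = ⊤
        · exact absurd h (not_lt.mpr (hc i hi))
        · exact h2 i hi
      · rw [G.costLT_eq_top i _ _ h]; exact le_top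
    · obtain ⟨i, hi⟩ := h3
      refine ⟨i, ?_⟩
      show G.cost i (G.outcome v₀ σ)
        < G.costLT i (G.outcome v₀ (Function.update σ j σ')) (G.devBound (G.outcome v₀ σ))
      by_cases h : G.cost i (G.outcome v₀ (Function.update σ j σ'))
          < (G.devBound (G.outcome v₀ σ) : ℕ∞)
      · rwa [G.costLT_eq_cost i _ _ h]
      · rw [G.costLT_eq_top i _ _ h]
        exact lt_of_lt_of_le hi le_top
  · intro hchar j σ' hσ' hprec
    rw [hxLT] at hprec
    have hyz : ∀ i, G.cost i (G.outcome v₀ (Function.update σ j σ'))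
        ≤ G.costLT i (G.outcome v₀ (Function.update σ j σ')) (G.devBound (G.outcome v₀ σ)) := by
      intro i
      by_cases h : G.cost i (G.outcome v₀ (Function.update σ j σ'))
          < (G.devBound (G.outcome v₀ σ) : ℕ∞)
      · rw [G.costLT_eq_cost i _ _ h]
      · rw [G.costLT_eq_top i _ _ h]; exact le_top
    have hsec' : ¬ Prec j (fun i => G.cost i (G.outcome v₀ σ))
        (fun i => G.cost i (G.outcome v₀ (Function.update σ j σ'))) := by
      intro hp
      exact hsec ⟨j, σ', hσ', hp⟩
    have hxyj : G.cost j (G.outcome v₀ σ)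
        ≤ G.cost j (G.outcome v₀ (Function.update σ j σ')) :=
      not_lt.mp fun h => hsec' (Or.inl h)
    rcases hprec with hzj | ⟨he, hle, i₀, hi₀⟩
    · exact absurd hzj (not_lt.mpr (le_trans hxyj (hyz j)))
    · simp only at he hle hi₀
      have H1 : G.cost j (G.outcome v₀ σ)
          = G.cost j (G.outcome v₀ (Function.update σ j σ')) :=
        le_antisymm hxyj (he ▸ hyz j)
      have H2 : ∀ i, G.cost i (G.outcome v₀ σ) ≠ ⊤ →
          G.cost i (G.outcome v₀ σ) ≤ G.cost i (G.outcome v₀ (Function.update σ j σ')) := by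
        intro i hi
        by_cases h : G.cost i (G.outcome v₀ (Function.update σ j σ'))
            < (G.devBound (G.outcome v₀ σ) : ℕ∞)
        · have := hle i
          rwa [G.costLT_eq_cost i _ _ h] at this
        · exact le_of_lt (lt_of_lt_of_le (hfin i hi) (not_lt.mp h))
      have H3 : ∃ i, G.cost i (G.outcome v₀ σ)
          < G.cost i (G.outcome v₀ (Function.update σ j σ')) := by
        refine ⟨i₀, ?_⟩
        by_cases h : G.cost i₀ (G.outcome v₀ (Function.update σ j σ'))
            < (G.devBound (G.outcome v₀ σ) : ℕ∞)
        · rwa [G.costLT_eq_cost i₀ _ _ h] at hi₀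
        · have hne : G.cost i₀ (G.outcome v₀ σ) ≠ ⊤ := by
            rw [G.costLT_eq_top i₀ _ _ h] at hi₀
            exact hi₀.ne
          exact lt_of_lt_of_le (hfin i₀ hne) (not_lt.mp h)
      obtain ⟨l, hl, hlD⟩ := hchar j σ' hσ' ⟨H1, H2, H3⟩
      have hll := hle l
      rw [hl, G.costLT_eq_cost l _ _ hlD] at hll
      exact not_top_lt (lt_of_le_of_lt hll hlD)
end
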